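/- arXiv:0910.5634 — 6 statements merged into one kernel-verified Lean document; each statement's English description precedes it below -/
import Mathlib

section
/- Let α and β be paths in a topological space X with the same endpoints. Suppose there is a sequence (a_n, b_n) of pairwise disjoint open subintervals of [0,1] such that α and β coincide on [0,1] minus the union of the (a_n,b_n), and for each n the restriction of α to [a_n,b_n] is homotopic (rel endpoints) to the restriction of β to [a_n,b_n] within the set α([a_n,b_n]) ∪ β([a_n,b_n]). Then α and β are homotopic rel {0,1}. -/
open Set

/-- Lemma `infhomotopies`. Let `α, β` be paths in a topological space `X`
(continuous on `[0,1]`, with the same endpoints).  Suppose there is a sequence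
`(a n, b n)` of pairwise disjoint open subintervals of `[0,1]` such that `α` and `β`
coincide on `[0,1]` minus the union of the `(a n, b n)`, and for each `n` the restriction
of `α` to `[a n, b n]` is homotopic rel endpoints to the restriction of `β` to
`[a n, b n]` within `α '' [a n, b n] ∪ β '' [a n, b n]`.  Then `α` and `β` are homotopic
rel `{0,1}`. -/
theorem statement0 {X : Type*} [TopologicalSpace X]
    (α β : ℝ → X)
    (hα : ContinuousOn α (Icc 0 1)) (hβ : ContinuousOn β (Icc 0 1))
    (h0 : α 0 = β 0) (h1 : α 1 = β 1)
    (a b : ℕ → ℝ)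
    (hab : ∀ n, 0 ≤ a n ∧ a n < b n ∧ b n ≤ 1)
    (hdisj : ∀ m n, m ≠ n → Disjoint (Ioo (a m) (b m)) (Ioo (a n) (b n)))
    (heq : ∀ t ∈ Icc (0:ℝ) 1, t ∉ (⋃ n, Ioo (a n) (b n)) → α t = β t)
    (hhom : ∀ n, ∃ F : ℝ × ℝ → X,
      ContinuousOn F (Icc 0 1 ×ˢ Icc (a n) (b n)) ∧
      (∀ t ∈ Icc (a n) (b n), F (0, t) = α t ∧ F (1, t) = β t) ∧
      (∀ s ∈ Icc (0:ℝ) 1, F (s, a n) = α (a n) ∧ F (s, b n) = α (b n)) ∧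
      F '' (Icc 0 1 ×ˢ Icc (a n) (b n)) ⊆ α '' Icc (a n) (b n) ∪ β '' Icc (a n) (b n)) :
    ∃ F : ℝ × ℝ → X,
      ContinuousOn F (Icc 0 1 ×ˢ Icc 0 1) ∧
      (∀ t ∈ Icc (0:ℝ) 1, F (0, t) = α t ∧ F (1, t) = β t) ∧
      (∀ s ∈ Icc (0:ℝ) 1, F (s, 0) = α 0 ∧ F (s, 1) = α 1) := by
  classical
  choose G hG1 hG2 hG3 hG4 using hhom
  -- basic interval facts
  have habn : ∀ n, Icc (a n) (b n) ⊆ Icc (0:ℝ) 1 := fun n x hx =>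
    ⟨le_trans (hab n).1 hx.1, le_trans hx.2 (hab n).2.2⟩
  have huniq : ∀ m n t, t ∈ Ioo (a m) (b m) → t ∈ Ioo (a n) (b n) → m = n := by
    intro m n t hm hn
    by_contra h
    exact disjoint_left.mp (hdisj m n h) hm hn
  have henda : ∀ n, a n ∉ ⋃ k, Ioo (a k) (b k) := by
    intro n h
    obtain ⟨m, hm⟩ := mem_iUnion.mp h
    set x := (a n + min (b n) (b m)) / 2 with hx
    have h1 : a n < min (b n) (b m) := lt_min (hab n).2.1 hm.2
    have hxn : x ∈ Ioo (a n) (b n) :=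
      ⟨by simp [hx]; linarith, by have := min_le_left (b n) (b m); simp [hx]; linarith⟩
    have hxm : x ∈ Ioo (a m) (b m) :=
      ⟨by have := hm.1; simp [hx]; linarith,
       by have := min_le_right (b n) (b m); simp [hx]; linarith⟩
    have := huniq m n x hxm hxn
    subst this
    exact absurd hm.1 (lt_irrefl _)
  have hendb : ∀ n, b n ∉ ⋃ k, Ioo (a k) (b k) := by
    intro n h
    obtain ⟨m, hm⟩ := mem_iUnion.mp h
    set x := (max (a n) (a m) + b n) / 2 with hx
    have h1 : max (a n) (a m) < b n := max_lt (hab n).2.1 hm.1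
    have hxn : x ∈ Ioo (a n) (b n) :=
      ⟨by have := le_max_left (a n) (a m); simp [hx]; linarith, by simp [hx]; linarith⟩
    have hxm : x ∈ Ioo (a m) (b m) :=
      ⟨by have := le_max_right (a n) (a m); simp [hx]; linarith,
       by have := hm.2; simp [hx]; linarith⟩
    have := huniq m n x hxm hxn
    subst this
    exact absurd hm.2 (lt_irrefl _)
  -- the glued homotopy
  set F : ℝ × ℝ → X := fun p =>
    if h : ∃ n, p.2 ∈ Ioo (a n) (b n) then G h.choose p else α p.2 with hFdef
  have Fnot : ∀ s t, t ∉ (⋃ n, Ioo (a n) (b n)) → F (s, t) = α t := by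
    intro s t ht
    have h : ¬ ∃ n, t ∈ Ioo (a n) (b n) := by
      intro ⟨n, hn⟩; exact ht (mem_iUnion.mpr ⟨n, hn⟩)
    simp only [hFdef]
    exact dif_neg h
  have Fval : ∀ n s t, t ∈ Ioo (a n) (b n) → F (s, t) = G n (s, t) := by
    intro n s t ht
    have h : ∃ k, t ∈ Ioo (a k) (b k) := ⟨n, ht⟩
    simp only [hFdef]
    rw [dif_pos h, huniq h.choose n t h.choose_spec ht]
  have Fglue : ∀ n, EqOn F (G n) (Icc 0 1 ×ˢ Icc (a n) (b n)) := by
    intro n p hp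
    obtain ⟨hp1, hp2⟩ := hp
    rcases eq_or_lt_of_le hp2.1 with h | h
    · have hnot : p.2 ∉ ⋃ k, Ioo (a k) (b k) := by rw [← h]; exact henda n
      rw [show p = (p.1, p.2) from rfl, Fnot p.1 p.2 hnot, ← h]
      exact ((hG3 n p.1 hp1).1).symm
    · rcases eq_or_lt_of_le hp2.2 with h' | h'
      · have hnot : p.2 ∉ ⋃ k, Ioo (a k) (b k) := by rw [h']; exact hendb n
        rw [show p = (p.1, p.2) from rfl, Fnot p.1 p.2 hnot, h']
        exact ((hG3 n p.1 hp1).2).symm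
      · exact Fval n p.1 p.2 ⟨h, h'⟩
  have hFcont : ∀ n, ContinuousOn F (Icc 0 1 ×ˢ Icc (a n) (b n)) :=
    fun n => (hG1 n).congr (Fglue n)

  refine ⟨F, ?_, ?_, ?_⟩
  · -- continuity on the square
    rintro ⟨s, t⟩ ⟨hs, ht⟩
    by_cases hmem : ∃ n, t ∈ Ioo (a n) (b n)
    · obtain ⟨n, hn⟩ := hmem
      have h1 : ContinuousWithinAt F (Icc 0 1 ×ˢ Icc (a n) (b n)) (s, t) :=
        hFcont n (s, t) ⟨hs, ⟨hn.1.le, hn.2.le⟩⟩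
      refine h1.mono_of_mem_nhdsWithin (mem_nhdsWithin.mpr
        ⟨univ ×ˢ Ioo (a n) (b n), isOpen_univ.prod isOpen_Ioo, ⟨trivial, hn⟩, ?_⟩)
      rintro ⟨s', t'⟩ ⟨⟨-, ht'⟩, ⟨hs', ht''⟩⟩
      exact ⟨hs', ⟨ht'.1.le, ht'.2.le⟩⟩
    · have htU : t ∉ ⋃ n, Ioo (a n) (b n) := fun hh => hmem (mem_iUnion.mp hh)
      have hFt : F (s, t) = α t := Fnot s t htU
      have htab : α t = β t := heq t ht htU
      -- common δ extraction
      have hδget : ∀ U' : Set X, IsOpen U' → α t ∈ U' →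
          ∃ δ > (0:ℝ), ∀ x ∈ Icc (0:ℝ) 1, |x - t| ≤ δ → α x ∈ U' ∧ β x ∈ U' := by
        intro U' hU'open hU'mem
        have hαU : α ⁻¹' U' ∈ nhdsWithin t (Icc 0 1) := hα t ht (hU'open.mem_nhds hU'mem)
        have hβU : β ⁻¹' U' ∈ nhdsWithin t (Icc 0 1) :=
          hβ t ht (hU'open.mem_nhds (htab ▸ hU'mem))
        obtain ⟨δ1, hδ1, hball1⟩ := Metric.mem_nhdsWithin_iff.mp hαU
        obtain ⟨δ2, hδ2, hball2⟩ := Metric.mem_nhdsWithin_iff.mp hβU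
        refine ⟨min δ1 δ2 / 2, by positivity, ?_⟩
        intro x hx hxd
        have hlt : |x - t| < min δ1 δ2 :=
          lt_of_le_of_lt hxd (half_lt_self (lt_min hδ1 hδ2))
        constructor
        · apply hball1
          refine ⟨?_, hx⟩
          rw [Metric.mem_ball, Real.dist_eq]
          exact lt_of_lt_of_le hlt (min_le_left _ _)
        · apply hball2
          refine ⟨?_, hx⟩
          rw [Metric.mem_ball, Real.dist_eq]
          exact lt_of_lt_of_le hlt (min_le_right _ _)
      -- right half
      have hR : ContinuousWithinAt F
          ((Icc 0 1 ×ˢ Icc (0:ℝ) 1) ∩ {p : ℝ × ℝ | t ≤ p.2}) (s, t) := by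
        by_cases hstart : ∃ n, a n = t
        · obtain ⟨n, hn⟩ := hstart
          have h1 : ContinuousWithinAt F (Icc 0 1 ×ˢ Icc (a n) (b n)) (s, t) :=
            hFcont n (s, t) ⟨hs, ⟨hn.le, hn ▸ (hab n).2.1.le⟩⟩
          refine h1.mono_of_mem_nhdsWithin (mem_nhdsWithin.mpr
            ⟨univ ×ˢ Iio (b n), isOpen_univ.prod isOpen_Iio,
             ⟨trivial, hn ▸ (hab n).2.1⟩, ?_⟩)
          rintro ⟨s', t'⟩ ⟨⟨-, ht1⟩, ⟨⟨hs', ht2⟩, ht3⟩⟩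
          exact ⟨hs', ⟨le_of_eq_of_le hn ht3, ht1.le⟩⟩
        · show Filter.Tendsto F _ (nhds (F (s, t)))
          rw [hFt, Filter.tendsto_def]
          intro U hU
          obtain ⟨U', hU'sub, hU'open, hU'mem⟩ := mem_nhds_iff.mp hU
          obtain ⟨δ, hδpos, hsafe⟩ := hδget U' hU'open hU'mem
          have hstr : ∃ δ' > (0:ℝ), δ' ≤ δ ∧ ∀ j, t < a j → a j < t + δ' → b j ≤ t + δ := by
            by_cases hk : ∃ k, t < a k ∧ a k < t + δ ∧ t + δ ≤ b k
            · obtain ⟨k, hk1, hk2, hk3⟩ := hk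
              refine ⟨a k - t, by linarith, by linarith, ?_⟩
              intro j hj1 hj2
              by_contra hcon
              push_neg at hcon
              have hjk : j = k := by
                by_contra hne
                have hj2' : a j < t + δ := by linarith
                refine disjoint_left.mp (hdisj j k hne)
                  (show (max (a j) (a k) + (t + δ)) / 2 ∈ Ioo (a j) (b j) from
                    ⟨by have := le_max_left (a j) (a k); have := max_lt hj2' hk2; linarith,
                     by have := max_lt hj2' hk2; linarith⟩)
                  ⟨by have := le_max_right (a j) (a k); have := max_lt hj2' hk2; linarith,
                   by have := max_lt hj2' hk2; linarith⟩
              rw [hjk] at hj2; linarith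
            · push_neg at hk
              exact ⟨δ, hδpos, le_refl δ, fun j hj1 hj2 => (hk j hj1 hj2).le⟩
          obtain ⟨δ', hδ'pos, hδ'le, hkey⟩ := hstr
          have hclaim : ∀ s' ∈ Icc (0:ℝ) 1, ∀ t' ∈ Icc (0:ℝ) 1,
              t ≤ t' → t' < t + δ' → F (s', t') ∈ U' := by
            intro s' hs' t' ht' htt1 htt2
            by_cases hmem' : ∃ j, t' ∈ Ioo (a j) (b j)
            · obtain ⟨j, hj⟩ := hmem'
              have hta : t < a j := by
                rcases lt_trichotomy (a j) t with h | h | h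
                · exact absurd (mem_iUnion.mpr ⟨j, show t ∈ Ioo (a j) (b j) from ⟨h, lt_of_le_of_lt htt1 hj.2⟩⟩) htU
                · exact absurd ⟨j, h⟩ hstart
                · exact h
              have hbj : b j ≤ t + δ := hkey j hta (lt_trans hj.1 htt2)
              rw [Fval j s' t' hj]
              have himg := hG4 j (mem_image_of_mem (G j) (show (s', t') ∈ _ from
                ⟨hs', ⟨hj.1.le, hj.2.le⟩⟩))
              rcases himg with ⟨x, hx, hxe⟩ | ⟨x, hx, hxe⟩
              · rw [← hxe]
                exact (hsafe x (habn j hx) (abs_le.mpr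
                  ⟨by have := hx.1; linarith, by have := hx.2; linarith⟩)).1
              · rw [← hxe]
                exact (hsafe x (habn j hx) (abs_le.mpr
                  ⟨by have := hx.1; linarith, by have := hx.2; linarith⟩)).2
            · rw [Fnot s' t' (fun hh => hmem' (mem_iUnion.mp hh))]
              exact (hsafe t' ht' (abs_le.mpr ⟨by linarith, by linarith⟩)).1
          refine mem_nhdsWithin.mpr ⟨univ ×ˢ Iio (t + δ'), isOpen_univ.prod isOpen_Iio,
            ⟨trivial, show t < t + δ' by linarith⟩, ?_⟩
          rintro ⟨s', t'⟩ ⟨⟨-, ht1⟩, ⟨⟨hs', ht2⟩, ht3⟩⟩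
          exact hU'sub (hclaim s' hs' t' ht2 ht3 ht1)
      -- left half
      have hL : ContinuousWithinAt F
          ((Icc 0 1 ×ˢ Icc (0:ℝ) 1) ∩ {p : ℝ × ℝ | p.2 ≤ t}) (s, t) := by
        by_cases hend : ∃ n, b n = t
        · obtain ⟨n, hn⟩ := hend
          have h1 : ContinuousWithinAt F (Icc 0 1 ×ˢ Icc (a n) (b n)) (s, t) :=
            hFcont n (s, t) ⟨hs, ⟨hn ▸ (hab n).2.1.le, hn.ge⟩⟩
          refine h1.mono_of_mem_nhdsWithin (mem_nhdsWithin.mpr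
            ⟨univ ×ˢ Ioi (a n), isOpen_univ.prod isOpen_Ioi,
             ⟨trivial, hn ▸ (hab n).2.1⟩, ?_⟩)
          rintro ⟨s', t'⟩ ⟨⟨-, ht1⟩, ⟨⟨hs', ht2⟩, ht3⟩⟩
          exact ⟨hs', ⟨ht1.le, le_of_le_of_eq ht3 hn.symm⟩⟩
        · show Filter.Tendsto F _ (nhds (F (s, t)))
          rw [hFt, Filter.tendsto_def]
          intro U hU
          obtain ⟨U', hU'sub, hU'open, hU'mem⟩ := mem_nhds_iff.mp hU
          obtain ⟨δ, hδpos, hsafe⟩ := hδget U' hU'open hU'mem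
          have hstr : ∃ δ' > (0:ℝ), δ' ≤ δ ∧ ∀ j, b j < t → t - δ' < b j → t - δ ≤ a j := by
            by_cases hk : ∃ k, b k < t ∧ t - δ < b k ∧ a k ≤ t - δ
            · obtain ⟨k, hk1, hk2, hk3⟩ := hk
              refine ⟨t - b k, by linarith, by linarith, ?_⟩
              intro j hj1 hj2
              by_contra hcon
              push_neg at hcon
              have hjk : j = k := by
                by_contra hne
                have hj2' : t - δ < b j := by linarith
                refine disjoint_left.mp (hdisj j k hne)
                  (show ((t - δ) + min (b j) (b k)) / 2 ∈ Ioo (a j) (b j) from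
                    ⟨by have := min_le_left (b j) (b k); have := lt_min hj2' hk2; linarith,
                     by have := min_le_left (b j) (b k); have := lt_min hj2' hk2; linarith⟩)
                  ⟨by have := min_le_right (b j) (b k); have := lt_min hj2' hk2; linarith,
                   by have := min_le_right (b j) (b k); have := lt_min hj2' hk2; linarith⟩
              rw [hjk] at hj2; linarith
            · push_neg at hk
              exact ⟨δ, hδpos, le_refl δ, fun j hj1 hj2 => (hk j hj1 hj2).le⟩
          obtain ⟨δ', hδ'pos, hδ'le, hkey⟩ := hstr
          have hclaim : ∀ s' ∈ Icc (0:ℝ) 1, ∀ t' ∈ Icc (0:ℝ) 1,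
              t' ≤ t → t - δ' < t' → F (s', t') ∈ U' := by
            intro s' hs' t' ht' htt1 htt2
            by_cases hmem' : ∃ j, t' ∈ Ioo (a j) (b j)
            · obtain ⟨j, hj⟩ := hmem'
              have htb : b j < t := by
                rcases lt_trichotomy t (b j) with h | h | h
                · exact absurd (mem_iUnion.mpr ⟨j, show t ∈ Ioo (a j) (b j) from ⟨lt_of_lt_of_le hj.1 htt1, h⟩⟩) htU
                · exact absurd ⟨j, h.symm⟩ hend
                · exact h
              have haj : t - δ ≤ a j := hkey j htb (lt_trans htt2 hj.2)
              rw [Fval j s' t' hj]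
              have himg := hG4 j (mem_image_of_mem (G j) (show (s', t') ∈ _ from
                ⟨hs', ⟨hj.1.le, hj.2.le⟩⟩))
              rcases himg with ⟨x, hx, hxe⟩ | ⟨x, hx, hxe⟩
              · rw [← hxe]
                exact (hsafe x (habn j hx) (abs_le.mpr
                  ⟨by have := hx.1; linarith, by have := hx.2; linarith⟩)).1
              · rw [← hxe]
                exact (hsafe x (habn j hx) (abs_le.mpr
                  ⟨by have := hx.1; linarith, by have := hx.2; linarith⟩)).2
            · rw [Fnot s' t' (fun hh => hmem' (mem_iUnion.mp hh))]
              exact (hsafe t' ht' (abs_le.mpr ⟨by linarith, by linarith⟩)).1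
          refine mem_nhdsWithin.mpr ⟨univ ×ˢ Ioi (t - δ'), isOpen_univ.prod isOpen_Ioi,
            ⟨trivial, show t - δ' < t by linarith⟩, ?_⟩
          rintro ⟨s', t'⟩ ⟨⟨-, ht1⟩, ⟨⟨hs', ht2⟩, ht3⟩⟩
          exact hU'sub (hclaim s' hs' t' ht2 ht3 ht1)
      exact (hL.union hR).mono (fun p hp => by
        rcases le_total p.2 t with h | h
        exacts [Or.inl ⟨hp, h⟩, Or.inr ⟨hp, h⟩])
  · intro t ht
    by_cases h : ∃ n, t ∈ Ioo (a n) (b n)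
    · obtain ⟨n, hn⟩ := h
      have h' : t ∈ Icc (a n) (b n) := ⟨hn.1.le, hn.2.le⟩
      constructor
      · rw [Fval n 0 t hn]; exact (hG2 n t h').1
      · rw [Fval n 1 t hn]; exact (hG2 n t h').2
    · have htU : t ∉ ⋃ n, Ioo (a n) (b n) := fun hh => h (mem_iUnion.mp hh)
      exact ⟨Fnot 0 t htU, (Fnot 1 t htU).trans (heq t ht htU)⟩
  · intro s hs
    have h01 : (0:ℝ) ∉ ⋃ n, Ioo (a n) (b n) := by
      intro h
      obtain ⟨n, hn⟩ := mem_iUnion.mp h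
      exact absurd hn.1 (not_lt.mpr (hab n).1)
    have h11 : (1:ℝ) ∉ ⋃ n, Ioo (a n) (b n) := by
      intro h
      obtain ⟨n, hn⟩ := mem_iUnion.mp h
      exact absurd hn.2 (not_lt.mpr (hab n).2.2)
    exact ⟨Fnot s 0 h01, Fnot s 1 h11⟩
end

section
/- Let G be a connected locally finite graph and |G| its Freudenthal compactification. Every topological path σ: [0,1] → |G| traverses each edge of G only finitely often, i.e., for each edge e there are only finitely many maximal subintervals [s,t] of [0,1] with {σ(s),σ(t)} equal to the endpoints of e and σ((s,t)) equal to the open edge. -/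
open Set

noncomputable section

/-- An abstract model of a connected locally finite graph `G` (with vertex set `V`)
together with its Freudenthal compactification `|G| = X`: a compact Hausdorff space
containing the geometric realization of `G` (vertices and edges) as a dense subspace;
the points outside this realization are the ends of `G`. -/
structure FGraph where
  /-- the vertex set -/
  V : Type
  /-- the point set of the Freudenthal compactification `|G|` -/
  X : Type
  [topX : TopologicalSpace X]
  [cptX : CompactSpace X]
  [t2X : T2Space X]
  /-- the adjacency relation of `G` -/
  adj : V → V → Prop
  symm : ∀ {u v}, adj u v → adj v u
  loopless : ∀ v, ¬ adj v v
  /-- `G` is locally finite -/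
  locallyFinite : ∀ v, {u | adj u v}.Finite
  /-- `G` is connected -/
  conn : ∀ u v : V, ∃ (n : ℕ) (c : ℕ → V), c 0 = u ∧ c n = v ∧ ∀ i < n, adj (c i) (c (i + 1))
  /-- the embedding of the vertices into `|G|` -/
  vtx : V → X
  vtx_inj : Function.Injective vtx
  /-- for each pair of adjacent vertices `u,v`, a parametrization `[0,1] → |G|` of
  the edge `uv` (the fixed characteristic map of this `1`-cell) -/
  θ : V → V → ℝ → X
  θ_cont : ∀ {u v}, adj u v → ContinuousOn (θ u v) (Icc 0 1)
  θ_injOn : ∀ {u v}, adj u v → InjOn (θ u v) (Icc 0 1)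
  θ_zero : ∀ {u v}, adj u v → θ u v 0 = vtx u
  θ_one : ∀ {u v}, adj u v → θ u v 1 = vtx v
  θ_symm : ∀ {u v}, adj u v → ∀ t, θ v u t = θ u v (1 - t)
  /-- the interior of an edge avoids all vertices -/
  int_avoids_vtx : ∀ {u v}, adj u v → ∀ t ∈ Ioo (0:ℝ) 1, θ u v t ∉ range vtx
  /-- distinct edges have disjoint interiors -/
  edges_disj : ∀ {u v u' v'}, adj u v → adj u' v' →
    ¬(u = u' ∧ v = v') → ¬(u = v' ∧ v = u') →
    Disjoint (θ u v '' Ioo 0 1) (θ u' v' '' Ioo 0 1)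
  /-- the geometric realization of `G` is dense in `|G|` … -/
  dense_graph : Dense (range vtx ∪ ⋃ (u) (v) (_ : adj u v), θ u v '' Ioo 0 1)
  /-- … and open in `|G|` (its complement is the compact set of ends) -/
  open_graph : IsOpen (range vtx ∪ ⋃ (u) (v) (_ : adj u v), θ u v '' Ioo 0 1)

attribute [instance] FGraph.topX FGraph.cptX FGraph.t2X

namespace FGraph

variable (Γ : FGraph)

/-- The geometric realization of the graph `G` inside `|G|`. -/
def graphPart : Set Γ.X :=
  range Γ.vtx ∪ ⋃ (u) (v) (_ : Γ.adj u v), Γ.θ u v '' Ioo 0 1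

/-- The set of ends of `G`, i.e. the points of `|G|` outside the graph itself. -/
def ends : Set Γ.X := (Γ.graphPart)ᶜ

/-- The interior of the edge `uv` in `|G|`. -/
def edgeInt (u v : Γ.V) : Set Γ.X := Γ.θ u v '' Ioo 0 1

/-- `σ` has a *pass* through the (oriented) edge `(u,v)` on the subinterval `[s,t]`:
`σ s = u`, `σ t = v`, and `σ` maps `(s,t)` onto the open edge `uv`. -/
def IsPass (σ : C(unitInterval, Γ.X)) (u v : Γ.V) (s t : unitInterval) : Prop :=
  s < t ∧ σ s = Γ.vtx u ∧ σ t = Γ.vtx v ∧ σ '' Ioo s t = Γ.edgeInt u v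

/-- The number of passes of a path `σ` through the oriented edge `(u,v)`. -/
def passCount (σ : C(unitInterval, Γ.X)) (u v : Γ.V) : ℕ :=
  {p : unitInterval × unitInterval | Γ.IsPass σ u v p.1 p.2}.ncard

/-- The signed number of traversals of the oriented edge `(u,v)` by `σ`. -/
def netCrossings (σ : C(unitInterval, Γ.X)) (u v : Γ.V) : ℤ :=
  (Γ.passCount σ u v : ℤ) - (Γ.passCount σ v u : ℤ)

/-- A circle in `|G|`: a loop that is injective on `[0,1)`. -/
def IsCircle (σ : C(unitInterval, Γ.X)) : Prop :=
  σ 0 = σ 1 ∧ InjOn σ (Ico 0 1)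

/-- The oriented topological cycle space `C⃗(G)`: all thin sums of oriented circuits,
an oriented circuit being the signed edge-traversal function of a circle in `|G|`.
(A family is thin if every oriented edge gets a nonzero value from only finitely many
members.)  Elements are recorded as antisymmetric functions `V → V → ℤ`. -/
def orientedCycleSpace : Set (Γ.V → Γ.V → ℤ) :=
  {φ | ∃ (ι : Type) (c : ι → C(unitInterval, Γ.X)),
    (∀ i, Γ.IsCircle (c i)) ∧
    (∀ u v, {i | Γ.netCrossings (c i) u v ≠ 0}.Finite) ∧
    (∀ u v, φ u v = ∑ᶠ i, Γ.netCrossings (c i) u v)}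

/-- The oriented cut `E⃗(U, U')` given by the partition `(U, Uᶜ)` of `V`. -/
def cutSet (U : Set Γ.V) : Set (Γ.V × Γ.V) :=
  {p | Γ.adj p.1 p.2 ∧ p.1 ∈ U ∧ p.2 ∉ U}

end FGraph

/-- Lemma `pass`. Every topological path `σ : [0,1] → |G|` in the
Freudenthal compactification of a connected locally finite graph `G` traverses each
edge of `G` only finitely often: for each edge `uv` there are only finitely many
subintervals `[s,t]` of `[0,1]` on which `σ` has a pass through `uv`. -/
theorem statement1 (Γ : FGraph) (σ : C(unitInterval, Γ.X)) :
    ∀ u v : Γ.V, Γ.adj u v →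
      {p : unitInterval × unitInterval | Γ.IsPass σ u v p.1 p.2}.Finite := by
  intro u v huv
  set S := {p : unitInterval × unitInterval | Γ.IsPass σ u v p.1 p.2} with hSdef
  have h2 : (1/2 : ℝ) ∈ Ioo (0:ℝ) 1 := by norm_num
  set m : Γ.X := Γ.θ u v (1/2) with hm
  have hmE : m ∈ Γ.edgeInt u v := ⟨1/2, h2, rfl⟩
  have hmu : m ≠ Γ.vtx u := fun h => Γ.int_avoids_vtx huv _ h2 (by rw [show Γ.θ u v (1/2) = m from rfl, h]; exact mem_range_self u)
  have hvtx_not : ∀ w : Γ.V, Γ.vtx w ∉ Γ.edgeInt u v := by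
    rintro w ⟨r, hr, hrw⟩
    exact Γ.int_avoids_vtx huv r hr (hrw ▸ mem_range_self w)
  set A : Set unitInterval := σ ⁻¹' {Γ.vtx u} with hAdef
  set B : Set unitInterval := σ ⁻¹' {m} with hBdef
  have hA : IsCompact A := (isClosed_singleton.preimage σ.continuous).isCompact
  have hB : IsClosed B := isClosed_singleton.preimage σ.continuous
  have hAB : Disjoint A B := by
    rw [Set.disjoint_left]
    intro x hxA hxB
    exact hmu ((show σ x = m from hxB).symm.trans (show σ x = Γ.vtx u from hxA))
  obtain ⟨δ, hδ, hdisj⟩ := hAB.exists_thickenings hA hB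
  have hsep : ∀ a ∈ A, ∀ b ∈ B, δ ≤ dist a b := by
    intro a ha b hb
    by_contra h
    push_neg at h
    exact Set.disjoint_left.mp hdisj (Metric.self_subset_thickening hδ A ha)
      (Metric.mem_thickening_iff.mpr ⟨b, hb, h⟩)
  -- each pass interval contains a point mapping to m
  have K1 : ∀ p ∈ S, ∃ x ∈ Ioo p.1 p.2, σ x = m := by
    intro p hp
    have h4 := hp.2.2.2
    rw [← h4] at hmE
    obtain ⟨x, hx, hxm⟩ := hmE
    exact ⟨x, hx, hxm⟩
  -- separation of start points
  have K2 : ∀ p ∈ S, ∀ q ∈ S, p.1 < q.1 → (p.1 : ℝ) + δ ≤ (q.1 : ℝ) := by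
    intro p hp q hq hlt
    obtain ⟨x, hx, hxm⟩ := K1 p hp
    have hxA : p.1 ∈ A := by
      simp only [hAdef, mem_preimage, mem_singleton_iff]; exact hp.2.1
    have hxB : x ∈ B := by
      simp only [hBdef, mem_preimage, mem_singleton_iff]; exact hxm
    have hδx : δ ≤ dist p.1 x := hsep _ hxA _ hxB
    have hd : dist p.1 x = (x : ℝ) - (p.1 : ℝ) := by
      rw [Subtype.dist_eq, Real.dist_eq, abs_of_nonpos (by
        have : (p.1 : ℝ) < (x : ℝ) := hx.1
        linarith)]
      ring
    have hq1 : q.1 ∉ Ioo p.1 p.2 := by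
      intro hmem
      have : σ q.1 ∈ Γ.edgeInt u v := by
        rw [← hp.2.2.2]; exact mem_image_of_mem σ hmem
      rw [hq.2.1] at this
      exact hvtx_not u this
    have hq2 : p.2 ≤ q.1 := by
      by_contra hcon
      push_neg at hcon
      exact hq1 ⟨hlt, hcon⟩
    have hxq : (x : ℝ) < (q.1 : ℝ) := lt_of_lt_of_le hx.2 hq2
    linarith [hδx.trans_eq hd]
  -- the start point determines the pass
  have K3 : ∀ p ∈ S, ∀ q ∈ S, p.1 = q.1 → p = q := by
    intro p hp q hq h1
    have key : ∀ p ∈ S, ∀ q ∈ S, p.1 = q.1 → p.2 < q.2 → False := by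
      intro p hp q hq h1 h2'
      have hmem : p.2 ∈ Ioo q.1 q.2 := ⟨h1 ▸ hp.1, h2'⟩
      have : σ p.2 ∈ Γ.edgeInt u v := by
        rw [← hq.2.2.2]; exact mem_image_of_mem σ hmem
      rw [hp.2.2.1] at this
      exact hvtx_not v this
    rcases lt_trichotomy p.2 q.2 with h | h | h
    · exact absurd (key p hp q hq h1 h) (fun f => f)
    · exact Prod.ext h1 h
    · exact absurd (key q hq p hp h1.symm h) (fun f => f)
  -- inject S into a finite set of naturals
  set f : unitInterval × unitInterval → ℕ := fun p => ⌊(p.1 : ℝ) / δ⌋₊ with hfdef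
  have hinj : Set.InjOn f S := by
    intro p hp q hq hfeq
    have main : ∀ p ∈ S, ∀ q ∈ S, p.1 < q.1 → f p ≠ f q := by
      intro p hp q hq hlt
      have h1 : (p.1 : ℝ) + δ ≤ (q.1 : ℝ) := K2 p hp q hq hlt
      have hp0 : (0:ℝ) ≤ (p.1 : ℝ) / δ := div_nonneg p.1.2.1 hδ.le
      have h2' : (p.1 : ℝ) / δ + 1 ≤ (q.1 : ℝ) / δ := by
        rw [div_add' _ _ _ hδ.ne', div_le_div_iff_of_pos_right hδ]
        linarith
      have : ⌊(p.1 : ℝ) / δ⌋₊ + 1 ≤ ⌊(q.1 : ℝ) / δ⌋₊ := by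
        calc ⌊(p.1 : ℝ) / δ⌋₊ + 1 = ⌊(p.1 : ℝ) / δ + 1⌋₊ := (Nat.floor_add_one hp0).symm
        _ ≤ ⌊(q.1 : ℝ) / δ⌋₊ := Nat.floor_le_floor h2'
      simp only [hfdef]
      omega
    rcases lt_trichotomy p.1 q.1 with h | h | h
    · exact absurd hfeq (main p hp q hq h)
    · exact K3 p hp q hq h
    · exact absurd hfeq.symm (main q hq p hp h)
  have himg : f '' S ⊆ Set.Iic ⌊1 / δ⌋₊ := by
    rintro _ ⟨p, hp, rfl⟩
    simp only [hfdef, Set.mem_Iic]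
    exact Nat.floor_le_floor (by gcongr; exact p.1.2.2)
  exact Set.Finite.of_finite_image ((Set.finite_Iic _).subset himg) hinj
end
end

section
/- In a metric space T with the property that for any two points x,y there is a unique arc xTy between them, and such that for any point z on the arc yTy' one has d(y,y') = d(y,z) + d(z,y'), the map F(y,t) = the unique point on the arc xTy at distance (1−t)·d(x,y) from a fixed basepoint x is a continuous homotopy, i.e., d(F(y,t), F(y',t)) ≤ d(y,y') for all y, y' and t ∈ [0,1]. -/
open Set

/-- A set `s` is an arc from `y` to `y'`: the homeomorphic (here: continuous injective)
image of `[0,1]` with endpoints `y, y'`. -/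
def IsArcBetween {T : Type*} [TopologicalSpace T] (y y' : T) (s : Set T) : Prop :=
  ∃ γ : ℝ → T, ContinuousOn γ (Icc 0 1) ∧ InjOn γ (Icc 0 1) ∧
    γ 0 = y ∧ γ 1 = y' ∧ γ '' Icc 0 1 = s

/-- In a metric space `T` which is uniquely arcwise connected and in which
arcs realize distances additively, the straight-line retraction
`F y t := ` the unique point on the arc `x T y` at distance `(1−t)·d(x,y)` from the fixed
basepoint `x` (with distances from `x` bounded) satisfies
`d(F y t, F y' t) ≤ d(y, y')` for all `y, y'` and `t ∈ [0,1]`; in particular it is a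
continuous homotopy. -/
theorem statement2 {T : Type*} [MetricSpace T]
    (arc : T → T → Set T)
    -- each `arc y y'` is an arc between `y` and `y'` (for `y ≠ y'`), and `arc y y = {y}`
    (harc : ∀ y y', y ≠ y' → IsArcBetween y y' (arc y y'))
    (harc_refl : ∀ y, arc y y = {y})
    -- unique arcwise connectedness: any arc between `y` and `y'` is `arc y y'`
    (huniq : ∀ y y' s, IsArcBetween y y' s → s = arc y y')
    -- arcs realize distances additively
    (hadd : ∀ y y', ∀ z ∈ arc y y', dist y y' = dist y z + dist z y')
    -- fixed basepoint, with bounded distances from it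
    (x : T) (hbdd : ∃ M, ∀ y, dist x y ≤ M)
    -- `F y t` is the unique point on the arc `x T y` at distance `(1-t) * d(x,y)` from `x`
    (F : T → ℝ → T)
    (hF : ∀ y, ∀ t ∈ Icc (0:ℝ) 1,
      F y t ∈ arc x y ∧ dist x (F y t) = (1 - t) * dist x y) :
    ∀ y y', ∀ t ∈ Icc (0:ℝ) 1, dist (F y t) (F y' t) ≤ dist y y' := by
  classical
  -- endpoints of arcs belong to arcs
  have mem_left : ∀ p q : T, p ∈ arc p q := by
    intro p q
    by_cases h : p = q
    · subst h; rw [harc_refl]; exact mem_singleton _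
    · obtain ⟨γ, hc, hi, h0, h1, him⟩ := harc p q h
      rw [← him]; exact ⟨0, by norm_num, h0⟩
  have mem_right : ∀ p q : T, q ∈ arc p q := by
    intro p q
    by_cases h : p = q
    · subst h; rw [harc_refl]; exact mem_singleton _
    · obtain ⟨γ, hc, hi, h0, h1, him⟩ := harc p q h
      rw [← him]; exact ⟨1, by norm_num, h1⟩
  -- reversal of arcs
  have symmArc : ∀ (p q : T) (s : Set T), IsArcBetween p q s → IsArcBetween q p s := by
    intro p q s ⟨γ, hc, hi, h0, h1, him⟩
    refine ⟨fun u => γ (1 - u), ?_, ?_, by simpa using h1, by simpa using h0, ?_⟩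
    · refine hc.comp ((continuous_const.sub continuous_id).continuousOn) ?_
      intro u hu
      exact ⟨by linarith [hu.2], by linarith [hu.1]⟩
    · intro u hu v hv h
      have h1u : (1 - u) ∈ Icc (0:ℝ) 1 := ⟨by linarith [hu.2], by linarith [hu.1]⟩
      have h1v : (1 - v) ∈ Icc (0:ℝ) 1 := ⟨by linarith [hv.2], by linarith [hv.1]⟩
      have := hi h1u h1v h
      linarith
    · rw [← him]
      ext w
      constructor
      · rintro ⟨u, hu, rfl⟩
        exact ⟨1 - u, ⟨by linarith [hu.2], by linarith [hu.1]⟩, rfl⟩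
      · rintro ⟨u, hu, rfl⟩
        exact ⟨1 - u, ⟨by linarith [hu.2], by linarith [hu.1]⟩, by norm_num⟩
  have arc_comm : ∀ p q : T, arc p q = arc q p := by
    intro p q
    by_cases h : p = q
    · subst h; rfl
    · exact (huniq q p (arc p q) (symmArc p q _ (harc p q h))).symm ▸
        (huniq q p (arc p q) (symmArc p q _ (harc p q h)))
  -- sub-arcs of an arc are the canonical arcs between their endpoints
  have arcSeg : ∀ γ : ℝ → T, ContinuousOn γ (Icc 0 1) → InjOn γ (Icc 0 1) →
      ∀ a b : ℝ, a ∈ Icc 0 1 → b ∈ Icc 0 1 → a ≤ b → γ '' Icc a b = arc (γ a) (γ b) := by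
    intro γ hc hi a b ha hb hab
    rcases eq_or_lt_of_le hab with rfl | hlt
    · rw [Icc_self, image_singleton, harc_refl]
    · have hmaps : ∀ w : ℝ, w ∈ Icc (0:ℝ) 1 → a + (b - a) * w ∈ Icc (0:ℝ) 1 := by
        intro w hw
        constructor
        · nlinarith [hw.1, hw.2, ha.1, hb.2]
        · nlinarith [hw.1, hw.2, ha.1, hb.2]
      refine huniq _ _ _ ⟨fun u => γ (a + (b - a) * u), ?_, ?_, ?_, ?_, ?_⟩
      · exact hc.comp (by fun_prop) hmaps
      · intro u hu v hv h
        have heq := hi (hmaps u hu) (hmaps v hv) h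
        have hba : b - a ≠ 0 := ne_of_gt (by linarith)
        have : (b - a) * u = (b - a) * v := by linarith
        exact mul_left_cancel₀ hba this
      · norm_num
      · show γ (a + (b - a) * 1) = γ b
        have : a + (b - a) * 1 = b := by ring
        rw [this]
      · ext w
        constructor
        · rintro ⟨u, hu, rfl⟩
          exact ⟨a + (b - a) * u, ⟨by nlinarith [hu.1], by nlinarith [hu.2]⟩, rfl⟩
        · rintro ⟨v, hv, rfl⟩
          refine ⟨(v - a) / (b - a), ⟨?_, ?_⟩, ?_⟩
          · exact div_nonneg (by linarith [hv.1]) (by linarith)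
          · rw [div_le_one (by linarith)]; linarith [hv.2]
          · show γ (a + (b - a) * ((v - a) / (b - a))) = γ v
            have hba : b - a ≠ 0 := ne_of_gt (by linarith)
            have : a + (b - a) * ((v - a) / (b - a)) = v := by
              field_simp
              ring
            rw [this]
  -- comparability of points on an arc from p
  have comp : ∀ p q z w : T, z ∈ arc p q → w ∈ arc p q → z ∈ arc p w ∨ w ∈ arc p z := by
    intro p q z w hz hw
    by_cases hpq : p = q
    · subst hpq
      rw [harc_refl, mem_singleton_iff] at hz hw
      left; rw [hz, hw]; exact mem_left p p
    · obtain ⟨γ, hc, hi, h0, h1, him⟩ := harc p q hpq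
      rw [← him] at hz hw
      obtain ⟨s, hs, rfl⟩ := hz
      obtain ⟨s', hs', rfl⟩ := hw
      rcases le_total s s' with h | h
      · left
        have hseg := arcSeg γ hc hi 0 s' ⟨le_refl 0, zero_le_one⟩ hs' hs'.1
        rw [h0] at hseg
        rw [← hseg]
        exact ⟨s, ⟨hs.1, h⟩, rfl⟩
      · right
        have hseg := arcSeg γ hc hi 0 s ⟨le_refl 0, zero_le_one⟩ hs hs.1
        rw [h0] at hseg
        rw [← hseg]
        exact ⟨s', ⟨hs'.1, h⟩, rfl⟩
  -- distance between two points of a common arc from p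
  have dOnArc : ∀ p q z w : T, z ∈ arc p q → w ∈ arc p q →
      dist z w = |dist p z - dist p w| := by
    intro p q z w hz hw
    rcases comp p q z w hz hw with h | h
    · have h1 := hadd p w z h
      have h2 : (0:ℝ) ≤ dist z w := dist_nonneg
      rw [abs_sub_comm, abs_of_nonneg (by linarith)]
      linarith
    · have h1 := hadd p z w h
      have h3 := dist_comm w z
      have h2 : (0:ℝ) ≤ dist z w := dist_nonneg
      rw [abs_of_nonneg (by linarith)]
      linarith
  -- a closer point lies on the sub-arc
  have below : ∀ p q z w : T, z ∈ arc p q → w ∈ arc p q → dist p z ≤ dist p w →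
      z ∈ arc p w := by
    intro p q z w hz hw hle
    rcases comp p q z w hz hw with h | h
    · exact h
    · have h1 := hadd p z w h
      have h2 : (0:ℝ) ≤ dist w z := dist_nonneg
      have h3 : dist w z = 0 := by linarith
      have h4 : w = z := dist_eq_zero.mp h3
      rw [← h4]; exact mem_right p w
  intro y y' t ht
  by_cases hxy : x = y
  · subst hxy
    have hz := (hF x t ht).1
    rw [harc_refl, mem_singleton_iff] at hz
    rw [hz]
    have h1 := hadd x y' (F y' t) (hF y' t ht).1
    have h2 : (0:ℝ) ≤ dist (F y' t) y' := dist_nonneg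
    linarith
  by_cases hxy' : x = y'
  · subst hxy'
    have hz' := (hF x t ht).1
    rw [harc_refl, mem_singleton_iff] at hz'
    rw [hz']
    have h1 := hadd x y (F y t) (hF y t ht).1
    have h2 : (0:ℝ) ≤ dist (F y t) y := dist_nonneg
    have h3 := dist_comm (F y t) x
    have h4 := dist_comm y x
    linarith
  by_cases hyy' : y = y'
  · subst hyy'; simp
  obtain ⟨hzmem, hza⟩ := hF y t ht
  obtain ⟨hz'mem, hz'a⟩ := hF y' t ht
  obtain ⟨γA, hcA, hiA, h0A, h1A, himA⟩ := harc x y hxy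
  obtain ⟨γB, hcB, hiB, h0B, h1B, himB⟩ := harc x y' hxy'
  -- the two arcs from x are compact
  have hAcomp : IsCompact (arc x y) := by
    rw [← himA]; exact isCompact_Icc.image_of_continuousOn hcA
  have hBcomp : IsCompact (arc x y') := by
    rw [← himB]; exact isCompact_Icc.image_of_continuousOn hcB
  have hKcomp : IsCompact (arc x y ∩ arc x y') := hAcomp.inter_right hBcomp.isClosed
  have hKne : (arc x y ∩ arc x y').Nonempty := ⟨x, mem_left x y, mem_left x y'⟩
  obtain ⟨m, hmK, hmax⟩ := hKcomp.exists_isMaxOn hKne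
    ((continuous_const.dist continuous_id).continuousOn)
  have hmA : m ∈ arc x y := hmK.1
  have hmB : m ∈ arc x y' := hmK.2
  -- points beyond m on arc x y
  have beyondA : ∀ w ∈ arc m y, w ∈ arc x y ∧ dist x w = dist x m + dist m w := by
    have hmA' : m ∈ γA '' Icc 0 1 := by rw [himA]; exact hmA
    obtain ⟨s0, hs0, hs0e⟩ := hmA'
    intro w hw
    have hseg : γA '' Icc s0 1 = arc m y := by
      have h := arcSeg γA hcA hiA s0 1 hs0 ⟨zero_le_one, le_refl 1⟩ hs0.2
      rwa [hs0e, h1A] at h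
    rw [← hseg] at hw
    obtain ⟨s1, hs1, rfl⟩ := hw
    have hs1' : s1 ∈ Icc (0:ℝ) 1 := ⟨hs0.1.trans hs1.1, hs1.2⟩
    have hxw : m ∈ arc x (γA s1) := by
      have h := arcSeg γA hcA hiA 0 s1 ⟨le_refl 0, zero_le_one⟩ hs1' hs1'.1
      rw [h0A] at h
      rw [← h]
      exact ⟨s0, ⟨hs0.1, hs1.1⟩, hs0e⟩
    refine ⟨?_, hadd x (γA s1) m hxw⟩
    rw [← himA]; exact ⟨s1, hs1', rfl⟩
  have beyondB : ∀ w ∈ arc m y', w ∈ arc x y' ∧ dist x w = dist x m + dist m w := by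
    have hmB' : m ∈ γB '' Icc 0 1 := by rw [himB]; exact hmB
    obtain ⟨s0, hs0, hs0e⟩ := hmB'
    intro w hw
    have hseg : γB '' Icc s0 1 = arc m y' := by
      have h := arcSeg γB hcB hiB s0 1 hs0 ⟨zero_le_one, le_refl 1⟩ hs0.2
      rwa [hs0e, h1B] at h
    rw [← hseg] at hw
    obtain ⟨s1, hs1, rfl⟩ := hw
    have hs1' : s1 ∈ Icc (0:ℝ) 1 := ⟨hs0.1.trans hs1.1, hs1.2⟩
    have hxw : m ∈ arc x (γB s1) := by
      have h := arcSeg γB hcB hiB 0 s1 ⟨le_refl 0, zero_le_one⟩ hs1' hs1'.1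
      rw [h0B] at h
      rw [← h]
      exact ⟨s0, ⟨hs0.1, hs1.1⟩, hs0e⟩
    refine ⟨?_, hadd x (γB s1) m hxw⟩
    rw [← himB]; exact ⟨s1, hs1', rfl⟩
  -- the median identity: d(y,y') = d(y,m) + d(m,y')
  have hmed : dist y y' = dist y m + dist m y' := by
    by_cases hmy : m = y
    · rw [hmy]; simp
    by_cases hmy' : m = y'
    · rw [hmy']; simp [dist_comm]
    -- the two halves meet only at m
    have hdisj : ∀ w, w ∈ arc y m → w ∈ arc m y' → w = m := by
      intro w hw1 hw2
      rw [arc_comm y m] at hw1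
      obtain ⟨hwA, hweq⟩ := beyondA w hw1
      obtain ⟨hwB, _⟩ := beyondB w hw2
      have hle : dist x w ≤ dist x m := hmax ⟨hwA, hwB⟩
      have h2 : (0:ℝ) ≤ dist m w := dist_nonneg
      have h3 : dist m w = 0 := by linarith
      exact (dist_eq_zero.mp h3).symm
    obtain ⟨γ1, hc1, hi1, h01, h11, him1⟩ := harc y m (Ne.symm hmy)
    obtain ⟨γ2, hc2, hi2, h02, h12, him2⟩ := harc m y' hmy'
    set f : ℝ → T := fun s => γ1 (min (2 * s) 1) with hf
    set g : ℝ → T := fun s => γ2 (max (2 * s - 1) 0) with hg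
    have hfmaps : ∀ s : ℝ, s ∈ Icc (0:ℝ) 1 → min (2 * s) 1 ∈ Icc (0:ℝ) 1 := by
      intro s hs
      exact ⟨le_min (by linarith [hs.1]) zero_le_one, min_le_right _ _⟩
    have hgmaps : ∀ s : ℝ, s ∈ Icc (0:ℝ) 1 → max (2 * s - 1) 0 ∈ Icc (0:ℝ) 1 := by
      intro s hs
      exact ⟨le_max_right _ _, max_le (by linarith [hs.2]) zero_le_one⟩
    have hfc : ContinuousOn f (Icc 0 1) :=
      hc1.comp (by fun_prop) hfmaps
    have hgc : ContinuousOn g (Icc 0 1) :=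
      hc2.comp (by fun_prop) hgmaps
    have harcδ : IsArcBetween y y' (arc y m ∪ arc m y') := by
      refine ⟨fun s => if s ≤ 1/2 then f s else g s, ?_, ?_, ?_, ?_, ?_⟩
      · refine ContinuousOn.if ?_ (hfc.mono inter_subset_left) (hgc.mono inter_subset_left)
        intro a ha
        have ha2 : a ∈ frontier (Iic (1/2 : ℝ)) := ha.2
        have : a = 1/2 := frontier_Iic_subset _ ha2
        subst this
        show γ1 (min (2 * (1/2)) 1) = γ2 (max (2 * (1/2) - 1) 0)
        norm_num [h11, h02]
      · intro u hu v hv huv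
        have huv' : (if u ≤ 1/2 then γ1 (min (2*u) 1) else γ2 (max (2*u-1) 0))
            = (if v ≤ 1/2 then γ1 (min (2*v) 1) else γ2 (max (2*v-1) 0)) := huv
        clear huv
        by_cases hu2 : u ≤ 1/2 <;> by_cases hv2 : v ≤ 1/2
        · rw [if_pos hu2, if_pos hv2, min_eq_left (by linarith : 2*u ≤ 1),
            min_eq_left (by linarith : 2*v ≤ 1)] at huv'
          have := hi1 ⟨by linarith [hu.1], by linarith⟩ ⟨by linarith [hv.1], by linarith⟩ huv'
          linarith
        · rw [if_pos hu2, if_neg hv2] at huv'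
          push_neg at hv2
          rw [min_eq_left (by linarith : 2*u ≤ 1),
            max_eq_left (by linarith : (0:ℝ) ≤ 2*v-1)] at huv'
          have hm1 : γ1 (2 * u) ∈ arc y m := by
            rw [← him1]; exact ⟨2 * u, ⟨by linarith [hu.1], by linarith⟩, rfl⟩
          have hm2 : γ1 (2 * u) ∈ arc m y' := by
            rw [huv', ← him2]; exact ⟨2 * v - 1, ⟨by linarith, by linarith [hv.2]⟩, rfl⟩
          have h1 : γ1 (2 * u) = m := hdisj _ hm1 hm2
          have h2 : γ2 (2 * v - 1) = m := by rw [← huv']; exact h1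
          rw [← h11] at h1
          have := hi1 ⟨by linarith [hu.1], by linarith⟩ ⟨zero_le_one, le_refl 1⟩ h1
          rw [← h02] at h2
          have h2' := hi2 ⟨by linarith, by linarith [hv.2]⟩ ⟨le_refl 0, zero_le_one⟩ h2
          linarith
        · rw [if_neg hu2, if_pos hv2] at huv'
          push_neg at hu2
          rw [max_eq_left (by linarith : (0:ℝ) ≤ 2*u-1),
            min_eq_left (by linarith : 2*v ≤ 1)] at huv'
          have hm1 : γ1 (2 * v) ∈ arc y m := by
            rw [← him1]; exact ⟨2 * v, ⟨by linarith [hv.1], by linarith⟩, rfl⟩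
          have hm2 : γ1 (2 * v) ∈ arc m y' := by
            rw [← huv', ← him2]; exact ⟨2 * u - 1, ⟨by linarith, by linarith [hu.2]⟩, rfl⟩
          have h1 : γ1 (2 * v) = m := hdisj _ hm1 hm2
          have h2 : γ2 (2 * u - 1) = m := by rw [huv']; exact h1
          rw [← h11] at h1
          have := hi1 ⟨by linarith [hv.1], by linarith⟩ ⟨zero_le_one, le_refl 1⟩ h1
          rw [← h02] at h2
          have h2' := hi2 ⟨by linarith, by linarith [hu.2]⟩ ⟨le_refl 0, zero_le_one⟩ h2
          linarith
        · rw [if_neg hu2, if_neg hv2] at huv'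
          push_neg at hu2 hv2
          rw [max_eq_left (by linarith : (0:ℝ) ≤ 2*u-1),
            max_eq_left (by linarith : (0:ℝ) ≤ 2*v-1)] at huv'
          have := hi2 ⟨by linarith, by linarith [hu.2]⟩ ⟨by linarith, by linarith [hv.2]⟩ huv'
          linarith
      · show (if (0:ℝ) ≤ 1/2 then γ1 (min (2*0) 1) else γ2 (max (2*0-1) 0)) = y
        rw [if_pos (by norm_num : (0:ℝ) ≤ 1/2)]
        norm_num [h01]
      · show (if (1:ℝ) ≤ 1/2 then γ1 (min (2*1) 1) else γ2 (max (2*1-1) 0)) = y'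
        rw [if_neg (by norm_num : ¬ (1:ℝ) ≤ 1/2)]
        norm_num [h12]
      · ext w
        constructor
        · rintro ⟨u, hu, rfl⟩
          show (if u ≤ 1/2 then γ1 (min (2*u) 1) else γ2 (max (2*u-1) 0)) ∈ _
          by_cases hu2 : u ≤ 1/2
          · left
            rw [if_pos hu2, ← him1]
            exact ⟨min (2 * u) 1, hfmaps u hu, rfl⟩
          · right
            rw [if_neg hu2, ← him2]
            exact ⟨max (2 * u - 1) 0, hgmaps u hu, rfl⟩
        · rintro (hw | hw)
          · rw [← him1] at hw
            obtain ⟨u, hu, rfl⟩ := hw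
            refine ⟨u / 2, ⟨by linarith [hu.1], by linarith [hu.2]⟩, ?_⟩
            show (if u/2 ≤ 1/2 then γ1 (min (2*(u/2)) 1) else γ2 (max (2*(u/2)-1) 0)) = γ1 u
            rw [if_pos (by linarith [hu.2])]
            have h2u : 2 * (u / 2) = u := by ring
            rw [h2u, min_eq_left hu.2]
          · rw [← him2] at hw
            obtain ⟨u, hu, rfl⟩ := hw
            by_cases hu0 : u = 0
            · subst hu0
              refine ⟨1/2, ⟨by norm_num, by norm_num⟩, ?_⟩
              show (if (1:ℝ)/2 ≤ 1/2 then γ1 (min (2*(1/2)) 1) else γ2 (max (2*(1/2)-1) 0)) = γ2 0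
              rw [if_pos (le_refl _)]
              norm_num [h11, h02]
            · have hu0' : 0 < u := lt_of_le_of_ne hu.1 (Ne.symm hu0)
              refine ⟨(u + 1) / 2, ⟨by linarith [hu.1], by linarith [hu.2]⟩, ?_⟩
              show (if (u+1)/2 ≤ 1/2 then γ1 (min (2*((u+1)/2)) 1)
                  else γ2 (max (2*((u+1)/2)-1) 0)) = γ2 u
              rw [if_neg (by intro h; nlinarith)]
              have h2u : 2 * ((u + 1) / 2) - 1 = u := by ring
              rw [h2u, max_eq_left hu.1]
    have hconc := huniq y y' _ harcδ
    have hm_mem : m ∈ arc y y' := by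
      rw [← hconc]; left; exact mem_right y m
    exact hadd y y' m hm_mem
  -- distances from x to y, y' through m
  have hdyM : dist x y = dist x m + dist m y := hadd x y m hmA
  have hdy'M : dist x y' = dist x m + dist m y' := hadd x y' m hmB
  have habs : |dist x y - dist x y'| ≤ dist y y' := by
    have h := abs_dist_sub_le y y' x
    rwa [dist_comm y x, dist_comm y' x] at h
  have habs1 : dist x y - dist x y' ≤ dist y y' := by
    have := le_abs_self (dist x y - dist x y'); linarith
  have habs2 : dist x y' - dist x y ≤ dist y y' := by
    have := neg_abs_le (dist x y - dist x y'); linarith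
  have ht0 : (0:ℝ) ≤ t := ht.1
  have ht1 : t ≤ 1 := ht.2
  have hdyy : (0:ℝ) ≤ dist y y' := dist_nonneg
  have e1 := dOnArc x y (F y t) m hzmem hmA
  have e2 := dOnArc x y' (F y' t) m hz'mem hmB
  have tri := dist_triangle (F y t) m (F y' t)
  have hcm := dist_comm m (F y' t)
  have hdm := dist_comm y m
  rcases le_total (dist x (F y t)) (dist x m) with hA | hA <;>
    rcases le_total (dist x (F y' t)) (dist x m) with hB | hB
  · -- both at or below m: both lie on arc x m
    have hz1 : F y t ∈ arc x m := below x y (F y t) m hzmem hmA hA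
    have hz2 : F y' t ∈ arc x m := below x y' (F y' t) m hz'mem hmB hB
    have e := dOnArc x m (F y t) (F y' t) hz1 hz2
    rw [e, hza, hz'a, ← mul_sub, abs_mul, abs_of_nonneg (by linarith : (0:ℝ) ≤ 1 - t)]
    nlinarith [abs_nonneg (dist x y - dist x y')]
  · -- z below m, z' beyond m
    rw [abs_of_nonpos (by linarith)] at e1
    rw [abs_of_nonneg (by linarith)] at e2
    nlinarith [mul_nonneg (by linarith : (0:ℝ) ≤ 1 - t)
        (by linarith : (0:ℝ) ≤ dist y y' - (dist x y' - dist x y)),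
      mul_nonneg ht0 hdyy]
  · -- z beyond m, z' below m
    rw [abs_of_nonneg (by linarith)] at e1
    rw [abs_of_nonpos (by linarith)] at e2
    nlinarith [mul_nonneg (by linarith : (0:ℝ) ≤ 1 - t)
        (by linarith : (0:ℝ) ≤ dist y y' - (dist x y - dist x y')),
      mul_nonneg ht0 hdyy]
  · -- both beyond m
    rw [abs_of_nonneg (by linarith)] at e1
    rw [abs_of_nonneg (by linarith)] at e2
    nlinarith [mul_nonneg ht0 (dist_nonneg : (0:ℝ) ≤ dist x y),
      mul_nonneg ht0 (dist_nonneg : (0:ℝ) ≤ dist x y')]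
end

section
/- A word w: S → A (with letters indexed over ℕ as pairs e⃗_i, e⃖_i, each fiber finite) is reduced if and only if every position s ∈ S is permanent, where s is permanent if there is a finite I ⊆ ℕ with w(s) ∈ A_I such that s is not deleted in any reduction of the finite word w↾I. -/
open Set

noncomputable section

/-- A *reduction* of a word `w : S → A` over an alphabet `A` with letter-inversion
`inv`: a totally ordered set `R` (here: the linearly ordered index type `ι`) of disjoint
two-element subsets `{fst i, snd i}` of `S` such that the two elements of each pair
`p ∈ R` are adjacent in `S` minus the union of the pairs preceding `p`, and are mapped
by `w` to mutually inverse letters. -/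
structure Reduction {S A : Type} [LinearOrder S] (inv : A → A) (w : S → A) where
  /-- the (linearly ordered) index set of the reduction -/
  ι : Type
  [lin : LinearOrder ι]
  fst : ι → S
  snd : ι → S
  fst_lt_snd : ∀ i, fst i < snd i
  disjoint_pairs : ∀ i j, i ≠ j →
    fst i ≠ fst j ∧ fst i ≠ snd j ∧ snd i ≠ fst j ∧ snd i ≠ snd j
  inv_pair : ∀ i, w (snd i) = inv (w (fst i))
  adjacent : ∀ i, ∀ s : S, fst i < s → s < snd i →
    ∃ j, j < i ∧ (s = fst j ∨ s = snd j)

attribute [instance] Reduction.lin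

namespace Reduction

variable {S A : Type} [LinearOrder S] {inv : A → A} {w : S → A}

/-- The set of positions deleted by a reduction. -/
def deleted (R : Reduction inv w) : Set S := range R.fst ∪ range R.snd

/-- The word to which `w` reduces under the reduction `R`:
the restriction of `w` to the non-deleted positions. -/
def result (R : Reduction inv w) : {s : S // s ∉ R.deleted} → A := fun s => w s.1

end Reduction

/-- A word is *reduced* if it has no nonempty reduction. -/
def Reduced {S A : Type} [LinearOrder S] (inv : A → A) (w : S → A) : Prop :=
  ∀ R : Reduction inv w, IsEmpty R.ι

/-- Two words are the same *abstract word* if there is an order-preserving bijection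
between their position sets commuting with the labellings. -/
def WordEquiv {S₁ S₂ A : Type} [LinearOrder S₁] [LinearOrder S₂]
    (w₁ : S₁ → A) (w₂ : S₂ → A) : Prop :=
  ∃ e : S₁ ≃o S₂, ∀ s, w₂ (e s) = w₁ s

/-- The alphabet `A = {e⃗₀, e⃖₀, e⃗₁, e⃖₁, …}`: the letter `(b, i)` stands for the
oriented chord `e⃗ᵢ` if `b = true`, and for `e⃖ᵢ` if `b = false`. -/
abbrev Letter := Bool × ℕ

/-- The fixed-point-free involution pairing each letter with its inverse. -/
def Letter.inv (a : Letter) : Letter := (!a.1, a.2)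

/-- The set of positions of `w` whose letters have index in `I`
(the domain of the restricted word `w↾I`). -/
abbrev restDom {S : Type} (w : S → Letter) (I : Set ℕ) : Type := {s : S // (w s).2 ∈ I}

/-- The restriction `w↾I` of a word `w` to the letters with index in `I`. -/
def restr {S : Type} (w : S → Letter) (I : Set ℕ) : restDom w I → Letter :=
  fun s => w s.1

/-- A position `s` of a word `w : S → Letter` is *permanent* if there is a finite set
`I ⊆ ℕ` with `w s ∈ A_I` such that `s` is not deleted in any reduction of the finite
word `w↾I`. -/
def Permanent {S : Type} [LinearOrder S] (w : S → Letter) (s : S) : Prop :=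
  ∃ (I : Finset ℕ) (h : (w s).2 ∈ (I : Set ℕ)),
    ∀ R : Reduction Letter.inv (restr w (I : Set ℕ)),
      (⟨s, h⟩ : restDom w (I : Set ℕ)) ∉ R.deleted

set_option linter.unusedSectionVars false
set_option linter.unusedVariables false
set_option maxHeartbeats 1000000

namespace S10
open List

section ListLemmas
variable {α : Type} [DecidableEq α]

/-- Decomposition of a filtered list. -/
lemma filter_decomp {f : α → Bool} : ∀ {l m₁ m₂ : List α} {p : α},
    l.filter f = m₁ ++ p :: m₂ →
    ∃ l₁ l₂, l = l₁ ++ p :: l₂ ∧ l₁.filter f = m₁ ∧ l₂.filter f = m₂ := by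
  intro l
  induction l with
  | nil => intro m₁ m₂ p h; rw [List.filter_nil] at h; cases m₁ <;> simp_all
  | cons a l ih =>
    intro m₁ m₂ p h
    by_cases hfa : f a
    · rw [List.filter_cons_of_pos hfa] at h
      cases m₁ with
      | nil =>
        simp at h
        obtain ⟨rfl, hl⟩ := h
        exact ⟨[], l, by simp, rfl, hl⟩
      | cons b m₁' =>
        simp at h
        obtain ⟨rfl, hl⟩ := h
        obtain ⟨l₁, l₂, rfl, h1, h2⟩ := ih hl
        exact ⟨a :: l₁, l₂, by simp, by rw [List.filter_cons_of_pos hfa, h1], h2⟩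
    · rw [List.filter_cons_of_neg (by simpa using hfa)] at h
      obtain ⟨l₁, l₂, rfl, h1, h2⟩ := ih h
      exact ⟨a :: l₁, l₂, by simp, by rw [List.filter_cons_of_neg (by simpa using hfa), h1], h2⟩

/-- `p` comes strictly before `q` in `l`. -/
def Before (l : List α) (p q : α) : Prop := l.idxOf p < l.idxOf q

lemma before_of_split {l l₁ l₂ : List α} {p q : α} (hnd : l.Nodup)
    (hl : l = l₁ ++ q :: l₂) (hp : p ∈ l₁) : Before l p q := by
  subst hl
  have hq1 : q ∉ l₁ := by
    have := hnd
    rw [List.nodup_append] at this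
    exact fun hq => this.2.2 q hq q List.mem_cons_self rfl
  have h1 : l₁.idxOf p < l₁.length := List.idxOf_lt_length_iff.2 hp
  have h2 : (l₁ ++ q :: l₂).idxOf p = l₁.idxOf p := List.idxOf_append_of_mem hp
  have h3 : (l₁ ++ q :: l₂).idxOf q = l₁.length + (q :: l₂).idxOf q :=
    List.idxOf_append_of_notMem hq1
  unfold Before
  rw [h2, h3]
  simp
  omega

lemma split_of_before {l : List α} {p q : α} (hp : p ∈ l) (hq : q ∈ l)
    (h : Before l p q) : ∃ l₁ l₂, l = l₁ ++ q :: l₂ ∧ p ∈ l₁ := by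
  have hqlt : l.idxOf q < l.length := List.idxOf_lt_length_iff.2 hq
  refine ⟨l.take (l.idxOf q), l.drop (l.idxOf q + 1), ?_, ?_⟩
  · conv_lhs => rw [← List.take_append_drop (l.idxOf q) l]
    rw [List.drop_eq_getElem_cons hqlt]
    rw [List.getElem_idxOf hqlt]
  · have hpq : l.idxOf p < l.idxOf q := h
    have hplt : l.idxOf p < l.length := List.idxOf_lt_length_iff.2 hp
    have : (l.take (l.idxOf q))[l.idxOf p]'(by simp; exact ⟨h, hplt⟩) = p := by
      rw [List.getElem_take]
      exact List.getElem_idxOf hplt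
    rw [← this]
    exact List.getElem_mem _

/-- Filtering preserves and reflects relative order in a nodup list. -/
lemma before_filter_iff {f : α → Bool} {l : List α} (hnd : l.Nodup) {p q : α}
    (hp : p ∈ l.filter f) (hq : q ∈ l.filter f) :
    Before (l.filter f) p q ↔ Before l p q := by
  have hndf : (l.filter f).Nodup := hnd.filter f
  constructor
  · intro h
    obtain ⟨m₁, m₂, hm, hpm⟩ := split_of_before hp hq h
    obtain ⟨l₁, l₂, rfl, h1, h2⟩ := filter_decomp hm
    exact before_of_split hnd rfl (by rw [← h1] at hpm; exact List.mem_of_mem_filter hpm)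
  · intro h
    obtain ⟨l₁, l₂, rfl, hpm⟩ :=
      split_of_before (List.mem_of_mem_filter hp) (List.mem_of_mem_filter hq) h
    have hfq : f q = true := (List.mem_filter.1 hq).2
    have hfp : f p = true := (List.mem_filter.1 hp).2
    exact before_of_split (l₁ := l₁.filter f) (l₂ := l₂.filter f) hndf
      (by rw [List.filter_append, List.filter_cons_of_pos hfq])
      (List.mem_filter.2 ⟨hpm, hfp⟩)

lemma before_trichot {l : List α} (hnd : l.Nodup) {p q : α} (hp : p ∈ l) (hq : q ∈ l)
    (hne : p ≠ q) : Before l p q ∨ Before l q p := by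
  have : l.idxOf p ≠ l.idxOf q := fun h => hne ((List.idxOf_inj hp).1 h)
  rcases lt_or_gt_of_ne this with h | h
  · exact Or.inl h
  · exact Or.inr h

lemma before_irrefl {l : List α} {p : α} (h : Before l p p) : False := lt_irrefl _ h

lemma before_trans {l : List α} {p q r : α} (h1 : Before l p q) (h2 : Before l q r) :
    Before l p r := lt_trans h1 h2

/-- Lists with entries in a finite set and bounded length form a finite set. -/
lemma finite_lists {T : Set α} (hT : T.Finite) (N : ℕ) :
    {l : List α | l.length ≤ N ∧ ∀ x ∈ l, x ∈ T}.Finite := by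
  have : Finite T := hT.to_subtype
  refine ((List.finite_length_le T N).image (List.map Subtype.val)).subset ?_
  rintro l ⟨hlen, hmem⟩
  refine ⟨l.attach.map (fun x => (⟨x.1, hmem x.1 x.2⟩ : T)), by simpa using hlen, ?_⟩
  rw [List.map_map]
  simp

end ListLemmas

section RedList
variable {S : Type} [LinearOrder S]

/-- The set of positions appearing in a list of pairs. -/
def delset (l : List (S × S)) : Set S := {t | ∃ p ∈ l, t = p.1 ∨ t = p.2}

/-- A list of pairs of positions representing a finite reduction of the
restriction of `w` to positions satisfying `P`. -/
structure IsRedList (w : S → Letter) (P : S → Prop) (l : List (S × S)) : Prop where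
  memP : ∀ p ∈ l, P p.1
  lt_pair : ∀ p ∈ l, p.1 < p.2
  invp : ∀ p ∈ l, w p.2 = Letter.inv (w p.1)
  disj : l.Pairwise (fun p q => p.1 ≠ q.1 ∧ p.1 ≠ q.2 ∧ p.2 ≠ q.1 ∧ p.2 ≠ q.2)
  adj : ∀ l₁ p l₂, l = l₁ ++ p :: l₂ → ∀ t : S, P t → p.1 < t → t < p.2 → t ∈ delset l₁

variable {w : S → Letter} {l : List (S × S)} {I J : Finset ℕ}

lemma IsRedList.idx_eq {P : S → Prop} (h : IsRedList w P l) {p : S × S} (hp : p ∈ l) :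
    (w p.2).2 = (w p.1).2 := by rw [h.invp p hp]; rfl

lemma IsRedList.nodup {P : S → Prop} (h : IsRedList w P l) : l.Nodup :=
  h.disj.imp fun hpq => fun he => hpq.1 (by rw [he])

/-- The restriction of a reduction list to letters with index in `I`. -/
def rstr (w : S → Letter) (I : Finset ℕ) (l : List (S × S)) : List (S × S) :=
  l.filter fun p => decide ((w p.1).2 ∈ I)

lemma mem_of_mem_rstr {p : S × S} (h : p ∈ rstr w I l) : p ∈ l :=
  List.mem_of_mem_filter h

lemma rstr_isRedList (h : IsRedList w (fun t => (w t).2 ∈ J) l) (hIJ : I ⊆ J) :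
    IsRedList w (fun t => (w t).2 ∈ I) (rstr w I l) where
  memP p hp := by simpa using (List.mem_filter.1 hp).2
  lt_pair p hp := h.lt_pair p (mem_of_mem_rstr hp)
  invp p hp := h.invp p (mem_of_mem_rstr hp)
  disj := h.disj.sublist (List.filter_sublist (l := l))
  adj := by
    intro l₁ p l₂ hl t htI h1 h2
    obtain ⟨L₁, L₂, hL, hf1, hf2⟩ := filter_decomp hl
    obtain ⟨q, hq, hor⟩ := h.adj L₁ p L₂ hL t (hIJ htI) h1 h2
    have hqI : (w q.1).2 ∈ I := by
      rcases hor with rfl | rfl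
      · exact htI
      · rwa [← h.idx_eq (hL ▸ List.mem_append_left _ hq)]
    refine ⟨q, ?_, hor⟩
    rw [← hf1]
    exact List.mem_filter.2 ⟨hq, by simpa using hqI⟩

lemma rstr_delset (h : IsRedList w (fun t => (w t).2 ∈ J) l) {t : S} (ht : t ∈ delset l)
    (htI : (w t).2 ∈ I) : t ∈ delset (rstr w I l) := by
  obtain ⟨q, hq, hor⟩ := ht
  have hqI : (w q.1).2 ∈ I := by
    rcases hor with rfl | rfl
    · exact htI
    · rwa [← h.idx_eq hq]
  exact ⟨q, List.mem_filter.2 ⟨hq, by simpa using hqI⟩, hor⟩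

lemma rstr_rstr (hIJ : I ⊆ J) (l : List (S × S)) : rstr w I (rstr w J l) = rstr w I l := by
  unfold rstr
  rw [List.filter_filter]
  apply List.filter_congr
  intro p hp
  by_cases h : (w p.1).2 ∈ I
  · simp [h, hIJ h]
  · simp [h]

lemma rstr_eq_self (h : IsRedList w (fun t => (w t).2 ∈ I) l) : rstr w I l = l :=
  List.filter_eq_self.2 fun p hp => by simpa using h.memP p hp

end RedList

section Restrict
variable {S : Type} [LinearOrder S] {w : S → Letter}

lemma snd_idx_mem {R : Reduction Letter.inv w} {P : S → Prop} : True := trivial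

/-- The restriction of a reduction of `w` to the letters with index in `I`,
as a reduction of `w↾I`. -/
def restrictReduction (R : Reduction Letter.inv w) (I : Set ℕ) :
    Reduction Letter.inv (restr w I) where
  ι := {i : R.ι // (w (R.fst i)).2 ∈ I}
  fst i := ⟨R.fst i.1, i.2⟩
  snd i := ⟨R.snd i.1, by
    have : (w (R.snd i.1)).2 = (w (R.fst i.1)).2 := by rw [R.inv_pair]; rfl
    rw [this]; exact i.2⟩
  fst_lt_snd i := by exact Subtype.mk_lt_mk.2 (R.fst_lt_snd i.1)
  disjoint_pairs i j hij := by
    have hne : i.1 ≠ j.1 := fun h => hij (Subtype.ext h)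
    obtain ⟨h1, h2, h3, h4⟩ := R.disjoint_pairs i.1 j.1 hne
    exact ⟨fun h => h1 (congrArg Subtype.val h), fun h => h2 (congrArg Subtype.val h),
      fun h => h3 (congrArg Subtype.val h), fun h => h4 (congrArg Subtype.val h)⟩
  inv_pair i := by
    show w (R.snd i.1) = Letter.inv (w (R.fst i.1))
    exact R.inv_pair i.1
  adjacent i t h1 h2 := by
    obtain ⟨j, hj, hor⟩ := R.adjacent i.1 t.1 (Subtype.mk_lt_mk.1 h1) (Subtype.mk_lt_mk.1 h2)
    have hjI : (w (R.fst j)).2 ∈ I := by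
      rcases hor with h | h
      · rw [← h]; exact t.2
      · have : (w (R.snd j)).2 = (w (R.fst j)).2 := by rw [R.inv_pair]; rfl
        rw [← this, ← h]; exact t.2
    refine ⟨⟨j, hjI⟩, Subtype.mk_lt_mk.2 hj, ?_⟩
    rcases hor with h | h
    · exact Or.inl (Subtype.ext h)
    · exact Or.inr (Subtype.ext h)

/-- The positions of a word with letter index in a finite set form a finite set. -/
lemma finite_restDom (hfib : ∀ a : Letter, {s | w s = a}.Finite) (I : Finset ℕ) :
    {t : S | (w t).2 ∈ I}.Finite := by
  have : {t : S | (w t).2 ∈ I} ⊆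
      ⋃ a ∈ ((Finset.univ : Finset Bool) ×ˢ I : Finset Letter), {s | w s = a} := by
    intro t ht
    simp only [Set.mem_iUnion]
    exact ⟨w t, by simpa using ht, rfl⟩
  exact (((Finset.univ : Finset Bool) ×ˢ I).finite_toSet.biUnion fun a _ => hfib a).subset this

/-- Converting a structured reduction of `w↾I` into a reduction list. -/
lemma exists_redList_of_reduction (hfib : ∀ a : Letter, {s | w s = a}.Finite) (I : Finset ℕ)
    (R : Reduction Letter.inv (restr w (I : Set ℕ))) :
    ∃ l : List (S × S), IsRedList w (fun t => (w t).2 ∈ I) l ∧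
      ∀ d : restDom w (I : Set ℕ), d ∈ R.deleted → d.1 ∈ delset l := by
  have hD : Finite (restDom w (I : Set ℕ)) := (finite_restDom hfib I).to_subtype
  have hinj : Function.Injective R.fst := fun i j h => by
    by_contra hne
    exact (R.disjoint_pairs i j hne).1 h
  have : Finite R.ι := Finite.of_injective R.fst hinj
  have : Fintype R.ι := Fintype.ofFinite _
  set n := Fintype.card R.ι with hn
  let e : R.ι ≃o Fin n := (monoEquivOfFin R.ι rfl).symm
  let f : Fin n → S × S := fun j => ((R.fst (e.symm j)).1, (R.snd (e.symm j)).1)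
  have hfmem : ∀ j, (w (f j).1).2 ∈ I := fun j => (R.fst (e.symm j)).2
  have hinvf : ∀ j, w (f j).2 = Letter.inv (w (f j).1) := fun j => R.inv_pair (e.symm j)
  refine ⟨List.ofFn f, ?_, ?_⟩
  · constructor
    · intro p hp
      obtain ⟨j, rfl⟩ := (List.mem_ofFn (f := f) (a := p)).1 hp
      exact hfmem j
    · intro p hp
      obtain ⟨j, rfl⟩ := (List.mem_ofFn (f := f) (a := p)).1 hp
      exact Subtype.coe_lt_coe.2 (R.fst_lt_snd (e.symm j))
    · intro p hp
      obtain ⟨j, rfl⟩ := (List.mem_ofFn (f := f) (a := p)).1 hp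
      exact hinvf j
    · rw [List.pairwise_ofFn]
      intro i j hij
      have hne : e.symm i ≠ e.symm j := fun h => absurd (e.symm.injective h) (Fin.ne_of_lt hij)
      obtain ⟨h1, h2, h3, h4⟩ := R.disjoint_pairs (e.symm i) (e.symm j) hne
      exact ⟨fun h => h1 (Subtype.ext h), fun h => h2 (Subtype.ext h),
        fun h => h3 (Subtype.ext h), fun h => h4 (Subtype.ext h)⟩
    · intro l₁ p l₂ hl t htI h1 h2
      have hlenEq : n = l₁.length + (l₂.length + 1) := by
        have := congrArg List.length hl
        simpa using this
      have hlen : l₁.length < n := by omega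
      have hlen' : l₁.length < (List.ofFn f).length := by simpa using hlen
      let i : Fin n := ⟨l₁.length, hlen⟩
      have hpi : p = f i := by
        have ha : (List.ofFn f)[l₁.length]'hlen' = f i := by
          rw [List.getElem_ofFn]
        have hb : (List.ofFn f)[l₁.length]'hlen' = p := by
          rw [List.getElem_of_eq hl]
          rw [List.getElem_append_right (le_refl l₁.length)]
          simp
        rw [← ha, hb]
      subst hpi
      have hd1 : R.fst (e.symm i) < ⟨t, htI⟩ := Subtype.mk_lt_mk.2 h1
      have hd2 : (⟨t, htI⟩ : restDom w (I : Set ℕ)) < R.snd (e.symm i) := Subtype.mk_lt_mk.2 h2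
      obtain ⟨j, hj, hor⟩ := R.adjacent (e.symm i) ⟨t, htI⟩ hd1 hd2
      have hej : ((e j : Fin n) : ℕ) < l₁.length := by
        have h' : e j < i := by
          have := (OrderIso.lt_iff_lt e).2 hj
          simpa using this
        exact h'
      refine ⟨f (e j), ?_, ?_⟩
      · have hlt2 : ((e j : Fin n) : ℕ) < (List.ofFn f).length := by simp
        have ha : (List.ofFn f)[((e j : Fin n) : ℕ)]'hlt2 = f (e j) := by
          rw [List.getElem_ofFn]
        have hb : (List.ofFn f)[((e j : Fin n) : ℕ)]'hlt2 =
            l₁[((e j : Fin n) : ℕ)]'hej := by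
          rw [List.getElem_of_eq hl]
          exact List.getElem_append_left hej
        rw [← ha, hb]
        exact List.getElem_mem _
      · rcases hor with h | h
        · exact Or.inl (by rw [show t = ((⟨t, htI⟩ : restDom w (I : Set ℕ)) : S) from rfl, h]; simp [f])
        · exact Or.inr (by rw [show t = ((⟨t, htI⟩ : restDom w (I : Set ℕ)) : S) from rfl, h]; simp [f])
  · intro d hd
    rcases hd with ⟨i, hi⟩ | ⟨i, hi⟩
    · exact ⟨f (e i), (List.mem_ofFn (f := f)).2 ⟨e i, rfl⟩, Or.inl (by rw [← hi]; simp [f])⟩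
    · exact ⟨f (e i), (List.mem_ofFn (f := f)).2 ⟨e i, rfl⟩, Or.inr (by rw [← hi]; simp [f])⟩

end Restrict

section Koenig
variable {S : Type} [LinearOrder S] (w : S → Letter) (k₀ : ℕ) (s : S)

/-- The increasing family of finite index sets. -/
def Iset (n : ℕ) : Finset ℕ := insert k₀ (Finset.range n)

lemma Iset_mono {m n : ℕ} (h : m ≤ n) : Iset k₀ m ⊆ Iset k₀ n := by
  unfold Iset
  intro x hx
  rcases Finset.mem_insert.1 hx with h' | h'
  · exact Finset.mem_insert.2 (Or.inl h')
  · exact Finset.mem_insert.2 (Or.inr (Finset.mem_range.2 (lt_of_lt_of_le (Finset.mem_range.1 h') h)))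

lemma k0_mem_Iset (n : ℕ) : k₀ ∈ Iset k₀ n := Finset.mem_insert_self _ _

lemma mem_Iset_of_lt {k n : ℕ} (h : k < n) : k ∈ Iset k₀ n :=
  Finset.mem_insert.2 (Or.inr (Finset.mem_range.2 h))

/-- The family of reduction lists of `w↾Iₙ` deleting `s`. -/
def Fam (n : ℕ) : Set (List (S × S)) :=
  {l | IsRedList w (fun t => (w t).2 ∈ Iset k₀ n) l ∧ s ∈ delset l}

variable {w k₀ s}

lemma Fam_finite (hfib : ∀ a : Letter, {s | w s = a}.Finite) (n : ℕ) :
    (Fam w k₀ s n).Finite := by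
  have hT : {t : S | (w t).2 ∈ Iset k₀ n}.Finite := finite_restDom hfib (Iset k₀ n)
  have hTT : ({t : S | (w t).2 ∈ Iset k₀ n} ×ˢ {t : S | (w t).2 ∈ Iset k₀ n}).Finite :=
    hT.prod hT
  refine (finite_lists hTT hTT.toFinset.card).subset ?_
  rintro l ⟨hred, hdel⟩
  have hmem : ∀ p ∈ l, p ∈ ({t : S | (w t).2 ∈ Iset k₀ n} ×ˢ {t : S | (w t).2 ∈ Iset k₀ n}) := by
    intro p hp
    refine ⟨hred.memP p hp, ?_⟩
    show (w p.2).2 ∈ Iset k₀ n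
    rw [hred.idx_eq hp]
    exact hred.memP p hp
  refine ⟨?_, hmem⟩
  have hnd := hred.nodup
  have hsub : l.toFinset ⊆ hTT.toFinset := fun p hp =>
    hTT.mem_toFinset.2 (hmem p (List.mem_toFinset.1 hp))
  calc l.length = l.toFinset.card := (List.toFinset_card_of_nodup hnd).symm
  _ ≤ hTT.toFinset.card := Finset.card_le_card hsub

lemma Fam_nonempty (hfib : ∀ a : Letter, {s | w s = a}.Finite)
    (hs : ¬ Permanent w s) (hk : k₀ = (w s).2) (n : ℕ) : (Fam w k₀ s n).Nonempty := by
  have hkI : (w s).2 ∈ ((Iset k₀ n : Finset ℕ) : Set ℕ) := by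
    rw [← hk]; exact_mod_cast k0_mem_Iset k₀ n
  rw [Permanent] at hs
  push_neg at hs
  obtain ⟨R, hR⟩ := hs (Iset k₀ n) hkI
  obtain ⟨l, hl, hdel⟩ := exists_redList_of_reduction hfib (Iset k₀ n) R
  exact ⟨l, hl, hdel ⟨s, hkI⟩ hR⟩

lemma Fam_restrict (hk : k₀ = (w s).2) {m n : ℕ} (h : m ≤ n) {l : List (S × S)}
    (hl : l ∈ Fam w k₀ s n) : rstr w (Iset k₀ m) l ∈ Fam w k₀ s m := by
  obtain ⟨hred, hdel⟩ := hl
  refine ⟨rstr_isRedList hred (Iset_mono k₀ h), ?_⟩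
  refine rstr_delset hred hdel ?_
  rw [← hk]
  exact k0_mem_Iset k₀ m

/-- Members of `Fam _ _ _ n` that are restrictions of members of `Fam _ _ _ m`
for every `m ≥ n`. -/
def good (n : ℕ) : Set (List (S × S)) :=
  {l ∈ Fam w k₀ s n | ∀ m, n ≤ m → ∃ l' ∈ Fam w k₀ s m, rstr w (Iset k₀ n) l' = l}

lemma good_nonempty (hfib : ∀ a : Letter, {s | w s = a}.Finite)
    (hs : ¬ Permanent w s) (hk : k₀ = (w s).2) (n : ℕ) :
    (good (w := w) (k₀ := k₀) (s := s) n).Nonempty := by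
  by_contra hemp
  rw [Set.not_nonempty_iff_eq_empty] at hemp
  have hbad : ∀ l : {l // l ∈ Fam w k₀ s n}, ∃ m, n ≤ m ∧
      ∀ l' ∈ Fam w k₀ s m, rstr w (Iset k₀ n) l' ≠ l.1 := by
    intro l
    by_contra hb
    push_neg at hb
    have : l.1 ∈ good (w := w) (k₀ := k₀) (s := s) n := by
      refine ⟨l.2, fun m hm => ?_⟩
      obtain ⟨l', hl', heq⟩ := hb m hm
      exact ⟨l', hl', heq⟩
    rw [hemp] at this
    exact this
  choose φ hφ1 hφ2 using hbad
  have : Finite {l // l ∈ Fam w k₀ s n} := (Fam_finite hfib n).to_subtype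
  have : Fintype {l // l ∈ Fam w k₀ s n} := Fintype.ofFinite _
  set M := max n (Finset.univ.sup φ) with hM
  obtain ⟨L, hL⟩ := Fam_nonempty hfib hs hk M
  have hnM : n ≤ M := le_max_left _ _
  have hr : rstr w (Iset k₀ n) L ∈ Fam w k₀ s n := Fam_restrict hk hnM hL
  set x : {l // l ∈ Fam w k₀ s n} := ⟨rstr w (Iset k₀ n) L, hr⟩ with hx
  have hφM : φ x ≤ M := le_trans (Finset.le_sup (Finset.mem_univ x)) (le_max_right _ _)
  have h1 : rstr w (Iset k₀ (φ x)) L ∈ Fam w k₀ s (φ x) := Fam_restrict hk hφM hL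
  have h2 := hφ2 x _ h1
  apply h2
  rw [rstr_rstr (Iset_mono k₀ (hφ1 x))]

lemma good_extend (hfib : ∀ a : Letter, {s | w s = a}.Finite)
    (hs : ¬ Permanent w s) (hk : k₀ = (w s).2) (n : ℕ) {l : List (S × S)}
    (hl : l ∈ good (w := w) (k₀ := k₀) (s := s) n) :
    ∃ l', l' ∈ good (w := w) (k₀ := k₀) (s := s) (n + 1) ∧ rstr w (Iset k₀ n) l' = l := by
  by_contra hemp
  push_neg at hemp
  have hbad : ∀ l' : {l' // l' ∈ Fam w k₀ s (n+1)}, ∃ m, n + 1 ≤ m ∧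
      (rstr w (Iset k₀ n) l'.1 = l → ∀ x ∈ Fam w k₀ s m, rstr w (Iset k₀ (n+1)) x ≠ l'.1) := by
    intro l'
    by_cases hres : rstr w (Iset k₀ n) l'.1 = l
    · have : l'.1 ∉ good (w := w) (k₀ := k₀) (s := s) (n+1) := fun hg => hemp l'.1 hg hres
      rw [good] at this
      simp only [Set.mem_sep_iff, not_and, not_forall] at this
      obtain ⟨m, hm1, hm2⟩ := this l'.2
      refine ⟨m, hm1, fun _ x hx => ?_⟩
      intro hcon
      push_neg at hm2
      exact hm2 x hx hcon
    · exact ⟨n + 1, le_refl _, fun h => absurd h hres⟩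
  choose φ hφ1 hφ2 using hbad
  have : Finite {l' // l' ∈ Fam w k₀ s (n+1)} := (Fam_finite hfib (n+1)).to_subtype
  have : Fintype {l' // l' ∈ Fam w k₀ s (n+1)} := Fintype.ofFinite _
  set M := max (n+1) (Finset.univ.sup φ) with hM
  obtain ⟨L, hL, hLres⟩ := hl.2 M (le_trans (Nat.le_succ n) (le_max_left _ _))
  have h1 : rstr w (Iset k₀ (n+1)) L ∈ Fam w k₀ s (n+1) :=
    Fam_restrict hk (le_max_left _ _) hL
  set x : {l' // l' ∈ Fam w k₀ s (n+1)} := ⟨rstr w (Iset k₀ (n+1)) L, h1⟩ with hx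
  have hres : rstr w (Iset k₀ n) x.1 = l := by
    rw [hx]
    rw [rstr_rstr (Iset_mono k₀ (Nat.le_succ n))]
    exact hLres
  have hφM : φ x ≤ M := le_trans (Finset.le_sup (Finset.mem_univ x)) (le_max_right _ _)
  have h2 : rstr w (Iset k₀ (φ x)) L ∈ Fam w k₀ s (φ x) := Fam_restrict hk hφM hL
  have h3 := hφ2 x hres _ h2
  apply h3
  rw [rstr_rstr (Iset_mono k₀ (hφ1 x))]

/-- The compatible chain of reduction lists. -/
lemma exists_chain (hfib : ∀ a : Letter, {s | w s = a}.Finite)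
    (hs : ¬ Permanent w s) (hk : k₀ = (w s).2) :
    ∃ c : ℕ → List (S × S), (∀ n, c n ∈ Fam w k₀ s n) ∧
      (∀ m n, m ≤ n → rstr w (Iset k₀ m) (c n) = c m) := by
  have H : ∀ n (l : {l // l ∈ good (w := w) (k₀ := k₀) (s := s) n}),
      ∃ l' : {l' // l' ∈ good (w := w) (k₀ := k₀) (s := s) (n+1)},
        rstr w (Iset k₀ n) l'.1 = l.1 := by
    intro n l
    obtain ⟨l', hl', heq⟩ := good_extend hfib hs hk n l.2
    exact ⟨⟨l', hl'⟩, heq⟩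
  have h0 : ∃ l, l ∈ good (w := w) (k₀ := k₀) (s := s) 0 := good_nonempty hfib hs hk 0
  let f : (n : ℕ) → {l // l ∈ good (w := w) (k₀ := k₀) (s := s) n} :=
    fun n => Nat.rec ⟨h0.choose, h0.choose_spec⟩ (fun n prev => (H n prev).choose) n
  have hstep : ∀ n, rstr w (Iset k₀ n) (f (n+1)).1 = (f n).1 := fun n => (H n (f n)).choose_spec
  refine ⟨fun n => (f n).1, fun n => (f n).2.1, ?_⟩
  intro m n hmn
  induction n, hmn using Nat.le_induction with
  | base => exact rstr_eq_self (f m).2.1.1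
  | succ n hmn ih =>
    rw [← rstr_rstr (Iset_mono k₀ hmn) ((f (n+1)).1), hstep n, ih]

end Koenig

section Infinite
variable {S : Type} [LinearOrder S] {w : S → Letter} {k₀ : ℕ} {s : S} {c : ℕ → List (S × S)}

/-- From a compatible chain of finite reduction lists deleting `s`, build a nonempty
reduction of `w`, showing `w` is not reduced. -/
lemma not_reduced_of_chain
    (hF : ∀ n, IsRedList w (fun t => (w t).2 ∈ Iset k₀ n) (c n))
    (hdel : s ∈ delset (c 0))
    (hlink : ∀ m n, m ≤ n → rstr w (Iset k₀ m) (c n) = c m) :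
    ¬ Reduced Letter.inv w := by
  classical
  intro hred
  have mem_mono : ∀ {p : S × S} {m n : ℕ}, m ≤ n → p ∈ c m → p ∈ c n := by
    intro p m n h hp
    rw [← hlink m n h] at hp
    exact mem_of_mem_rstr hp
  set ι := {p : S × S // ∃ n, p ∈ c n} with hι
  let lev : ι → ℕ := fun p => Nat.find p.2
  have memlev : ∀ p : ι, p.1 ∈ c (lev p) := fun p => Nat.find_spec p.2
  have memge : ∀ (p : ι) (n : ℕ), lev p ≤ n → p.1 ∈ c n := fun p n h =>
    mem_mono h (memlev p)
  have stab : ∀ (p q : S × S) (m n : ℕ), m ≤ n → p ∈ c m → q ∈ c m →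
      (Before (c m) p q ↔ Before (c n) p q) := by
    intro p q m n h hp hq
    rw [← hlink m n h] at hp hq ⊢
    exact before_filter_iff (hF n).nodup hp hq
  let Lt : ι → ι → Prop := fun p q => Before (c (max (lev p) (lev q))) p.1 q.1
  have Ltc : ∀ (p q : ι) (n : ℕ), p.1 ∈ c n → q.1 ∈ c n →
      (Lt p q ↔ Before (c n) p.1 q.1) := by
    intro p q n hp hq
    set M := max (lev p) (lev q) with hM
    set N := max M n with hN
    have h1 : Lt p q ↔ Before (c N) p.1 q.1 :=
      stab p.1 q.1 M N (le_max_left _ _)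
        (memge p M (le_max_left _ _)) (memge q M (le_max_right _ _))
    have h2 : Before (c n) p.1 q.1 ↔ Before (c N) p.1 q.1 :=
      stab p.1 q.1 n N (le_max_right _ _) hp hq
    rw [h1, h2]
  haveI htri : IsTrichotomous ι Lt := by
    constructor
    intro p q
    intro hn1 hn2; refine (?_ : Lt p q ∨ p = q ∨ Lt q p).elim (fun h => absurd h hn1) (fun h => h.elim id (fun h => absurd h hn2))
    by_cases hpq : p = q
    · exact Or.inr (Or.inl hpq)
    · have hne : p.1 ≠ q.1 := fun h => hpq (Subtype.ext h)
      set n := max (lev p) (lev q) with hn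
      have hp := memge p n (le_max_left _ _)
      have hq := memge q n (le_max_right _ _)
      rcases before_trichot (hF n).nodup hp hq hne with h | h
      · exact Or.inl ((Ltc p q n hp hq).2 h)
      · exact Or.inr (Or.inr ((Ltc q p n hq hp).2 h))
  haveI hirr : IsIrrefl ι Lt := by
    constructor
    intro p hp
    exact before_irrefl hp
  haveI htrans : IsTrans ι Lt := by
    constructor
    intro p q r hpq hqr
    set n := max (max (lev p) (lev q)) (lev r) with hn
    have hp := memge p n (le_trans (le_max_left _ _) (le_max_left _ _))
    have hq := memge q n (le_trans (le_max_right _ _) (le_max_left _ _))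
    have hr := memge r n (le_max_right _ _)
    exact (Ltc p r n hp hr).2
      (before_trans ((Ltc p q n hp hq).1 hpq) ((Ltc q r n hq hr).1 hqr))
  haveI hso : IsStrictOrder ι Lt := ⟨⟩
  haveI hsto : IsStrictTotalOrder ι Lt := ⟨⟩
  letI lin : LinearOrder ι := linearOrderOfSTO Lt
  let R : Reduction Letter.inv w :=
    { ι := ι
      lin := lin
      fst := fun p => p.1.1
      snd := fun p => p.1.2
      fst_lt_snd := fun p => (hF (lev p)).lt_pair p.1 (memlev p)
      disjoint_pairs := by
        intro p q hpq
        have hne : p.1 ≠ q.1 := fun h => hpq (Subtype.ext h)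
        set n := max (lev p) (lev q) with hn
        have hp := memge p n (le_max_left _ _)
        have hq := memge q n (le_max_right _ _)
        have hsymm : Symmetric (fun p q : S × S =>
            p.1 ≠ q.1 ∧ p.1 ≠ q.2 ∧ p.2 ≠ q.1 ∧ p.2 ≠ q.2) := by
          intro a b h
          exact ⟨h.1.symm, h.2.2.1.symm, h.2.1.symm, h.2.2.2.symm⟩
        haveI : Std.Symm (fun p q : S × S =>
              p.1 ≠ q.1 ∧ p.1 ≠ q.2 ∧ p.2 ≠ q.1 ∧ p.2 ≠ q.2) := { symm := fun a b h => hsymm h }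
        exact (hF n).disj.forall hp hq hne
      inv_pair := fun p => (hF (lev p)).invp p.1 (memlev p)
      adjacent := by
        intro p t h1 h2
        set n := max (lev p) ((w t).2 + 1) with hn
        have hp := memge p n (le_max_left _ _)
        have htP : (w t).2 ∈ Iset k₀ n :=
          mem_Iset_of_lt k₀ (lt_of_lt_of_le (Nat.lt_succ_self _) (le_max_right _ _))
        obtain ⟨l₁, l₂, hsplit⟩ := List.append_of_mem hp
        obtain ⟨q, hq, hor⟩ := (hF n).adj l₁ p.1 l₂ hsplit t htP h1 h2
        have hqmem : q ∈ c n := by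
          rw [hsplit]
          exact List.mem_append_left _ hq
        set Q : ι := ⟨q, n, hqmem⟩ with hQ
        refine ⟨Q, ?_, hor⟩
        show Lt Q p
        exact (Ltc Q p n hqmem hp).2 (before_of_split (hF n).nodup hsplit hq)
    }
  have : IsEmpty R.ι := hred R
  obtain ⟨p, hp, -⟩ := hdel
  exact this.false (⟨p, 0, hp⟩ : ι)

end Infinite
end S10

/-- Lemma `permanent`. A word `w : S → Letter` (with countable
totally ordered domain and finite fibers) is reduced if and only if every position of
`w` is permanent. -/
theorem statement10 {S : Type} [LinearOrder S] [Countable S]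
    (w : S → Letter) (hfib : ∀ a : Letter, {s | w s = a}.Finite) :
    Reduced Letter.inv w ↔ ∀ s : S, Permanent w s := by
  constructor
  · intro hred s
    by_contra hs
    obtain ⟨c, hF, hlink⟩ := S10.exists_chain (w := w) (k₀ := (w s).2) (s := s) hfib hs rfl
    exact S10.not_reduced_of_chain (fun n => (hF n).1) (hF 0).2 hlink hred
  · intro hperm R
    refine ⟨fun i => ?_⟩
    obtain ⟨I, hI, hP⟩ := hperm (R.fst i)
    exact hP (S10.restrictReduction R (I : Set ℕ)) (Set.mem_union_left _ ⟨⟨i, hI⟩, rfl⟩)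
end
end

section
/- If R is a reduction of a word w: S → A and I ⊆ ℕ, then the set {{s,s'} ∈ R : w(s) ∈ A_I}, with the ordering induced from R, is a reduction of the restricted word w↾I. Consequently, any result of first reducing and then restricting a word can also be obtained by first restricting and then reducing. -/
open Set

noncomputable section

lemma snd_idx_mem {S : Type} [LinearOrder S] {w : S → Letter}
    (R : Reduction Letter.inv w) {I : Set ℕ} {i : R.ι}
    (h : (w (R.fst i)).2 ∈ I) : (w (R.snd i)).2 ∈ I := by
  rw [R.inv_pair i]; exact h

/-- The restriction of a reduction `R` of `w` to the pairs whose letters have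
index in `I`, as a reduction of `w↾I`. -/
def restrictReduction {S : Type} [LinearOrder S] {w : S → Letter}
    (R : Reduction Letter.inv w) (I : Set ℕ) :
    Reduction Letter.inv (restr w I) where
  ι := {i : R.ι // (w (R.fst i)).2 ∈ I}
  fst i := ⟨R.fst i.1, i.2⟩
  snd i := ⟨R.snd i.1, snd_idx_mem R i.2⟩
  fst_lt_snd i := by
    show R.fst i.1 < R.snd i.1
    exact R.fst_lt_snd i.1
  disjoint_pairs i j hij := by
    have h := R.disjoint_pairs i.1 j.1 (fun h => hij (Subtype.ext h))
    refine ⟨?_, ?_, ?_, ?_⟩ <;> intro he <;>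
      first
        | exact h.1 (congrArg Subtype.val he)
        | exact h.2.1 (congrArg Subtype.val he)
        | exact h.2.2.1 (congrArg Subtype.val he)
        | exact h.2.2.2 (congrArg Subtype.val he)
  inv_pair i := R.inv_pair i.1
  adjacent i s h1 h2 := by
    obtain ⟨j, hj, hcase⟩ := R.adjacent i.1 s.1 h1 h2
    have hjI : (w (R.fst j)).2 ∈ I := by
      rcases hcase with h | h
      · rw [← h]; exact s.2
      · have h2 : (w (R.snd j)).2 = (w (R.fst j)).2 := by rw [R.inv_pair j]; rfl
        rw [← h2, ← h]; exact s.2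
    refine ⟨⟨j, hjI⟩, hj, ?_⟩
    rcases hcase with h | h
    · exact Or.inl (Subtype.ext h)
    · exact Or.inr (Subtype.ext h)

lemma restrictReduction_deleted {S : Type} [LinearOrder S] {w : S → Letter}
    (R : Reduction Letter.inv w) (I : Set ℕ) (s : restDom w I) :
    s ∈ (restrictReduction R I).deleted ↔ s.1 ∈ R.deleted := by
  constructor
  · rintro (⟨i, rfl⟩ | ⟨i, rfl⟩)
    · exact Or.inl ⟨i.1, rfl⟩
    · exact Or.inr ⟨i.1, rfl⟩
  · rintro (⟨i, hi⟩ | ⟨i, hi⟩)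
    · have hiI : (w (R.fst i)).2 ∈ I := by rw [hi]; exact s.2
      exact Or.inl ⟨⟨i, hiI⟩, Subtype.ext hi⟩
    · have hiI : (w (R.fst i)).2 ∈ I := by
        have h2 : (w (R.snd i)).2 = (w (R.fst i)).2 := by rw [R.inv_pair i]; rfl
        rw [← h2, hi]; exact s.2
      exact Or.inr ⟨⟨i, hiI⟩, Subtype.ext hi⟩

/-- facts `(1)` and `(2)` about reductions and restrictions.
If `R` is a reduction of the word `w : S → Letter` and `I ⊆ ℕ`, then the set
`{{s,s'} ∈ R : w(s) ∈ A_I}`, with the ordering induced from `R`, is a reduction of the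
restricted word `w↾I`.  Consequently, any result of first reducing and then restricting
a word can also be obtained by first restricting and then reducing it. -/
theorem statement14 {S : Type} [LinearOrder S] [Countable S]
    (w : S → Letter) (hfib : ∀ a : Letter, {s | w s = a}.Finite)
    (R : Reduction Letter.inv w) (I : Set ℕ) :
    (∃ Q : Reduction Letter.inv (restr w I),
      ∃ e : {i : R.ι // (w (R.fst i)).2 ∈ I} ≃o Q.ι,
        ∀ i : {i : R.ι // (w (R.fst i)).2 ∈ I},
          ((Q.fst (e i)) : S) = R.fst i.1 ∧ ((Q.snd (e i)) : S) = R.snd i.1) ∧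
    (∃ Q : Reduction Letter.inv (restr w I),
      WordEquiv Q.result
        (fun s : {s : S // (w s).2 ∈ I ∧ s ∉ R.deleted} => w s.1)) := by
  constructor
  · exact ⟨restrictReduction R I, OrderIso.refl _, fun i => ⟨rfl, rfl⟩⟩
  · refine ⟨restrictReduction R I, ?_⟩
    refine ⟨{
      toFun := fun s => ⟨s.1.1, s.1.2, fun h =>
        s.2 ((restrictReduction_deleted R I s.1).2 h)⟩
      invFun := fun s => ⟨⟨s.1, s.2.1⟩, fun h =>
        s.2.2 ((restrictReduction_deleted R I ⟨s.1, s.2.1⟩).1 h)⟩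
      left_inv := fun s => rfl
      right_inv := fun s => rfl
      map_rel_iff' := Iff.rfl }, fun s => rfl⟩
end
end

section
/- If w = w₁w₂ is a reduced word in the alphabet {e⃗_{i_0}, e⃖_{i_0}, e⃗_{i_1}, e⃖_{i_1}, …} and n(v,k) counts (with sign) the maximal intervals of positions of v carrying the increasing sequence of letters e⃗_{i_{k}}, e⃗_{i_{k+1}}, … minus those carrying the decreasing sequence e⃖_{i_k}, e⃖_{i_{k+1}}, … in reverse order, then there exists k ∈ ℕ such that n(w,ℓ) = n(w₁,ℓ) + n(w₂,ℓ) for all ℓ ≥ k. -/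
open Set

noncomputable section

/-- `T` is an interval of positions of `v` of order type `ω` (for `b = true`,
increasing; for `b = false`, decreasing) carrying the letters
`e⃗_{i_k}, e⃗_{i_{k+1}}, …` (resp. `e⃖_{i_k}, e⃖_{i_{k+1}}, …` in reverse order). -/
def IsMonoInterval {S : Type} [LinearOrder S] (v : S → Letter) (idx : ℕ → ℕ)
    (k : ℕ) (b : Bool) (T : Set S) : Prop :=
  (∀ a ∈ T, ∀ c ∈ T, ∀ s, a ≤ s → s ≤ c → s ∈ T) ∧
  ∃ g : ℕ → S, (if b then StrictMono g else StrictAnti g) ∧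
    range g = T ∧ ∀ j, v (g j) = (b, idx (k + j))

/-- `n(v,k) = n⁺(v,k) − n⁺(v⁻,k)`: the signed count of maximal monotone intervals of
`v` carrying the tail `e⃗_{i_k}, e⃗_{i_{k+1}}, …` of the chord sequence. -/
def nval {S : Type} [LinearOrder S] (v : S → Letter) (idx : ℕ → ℕ) (k : ℕ) : ℤ :=
  ({T | IsMonoInterval v idx k true T}.ncard : ℤ) -
    ({T | IsMonoInterval v idx k false T}.ncard : ℤ)


section Statement16Aux
variable {S : Type} [LinearOrder S]

def IsIntvl (T : Set S) : Prop := ∀ a ∈ T, ∀ c ∈ T, ∀ s, a ≤ s → s ≤ c → s ∈ T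

lemma range_sub_aux {g g' : ℕ → S} (hg : StrictMono g) (hg' : StrictMono g')
    (hint : IsIntvl (range g)) (h0 : g 0 = g' 0) (hsub : range g ⊆ range g') :
    range g' ⊆ range g := by
  have hh : ∀ j, ∃ m, g' m = g j := fun j => hsub ⟨j, rfl⟩
  choose h hh using hh
  have hmono : StrictMono h := fun a b hab => hg'.lt_iff_lt.mp (by rw [hh, hh]; exact hg hab)
  rintro _ ⟨j, rfl⟩
  have h1 : g' j ≤ g j := by
    calc g' j ≤ g' (h j) := hg'.monotone hmono.le_apply
    _ = g j := hh j
  have h2 : g 0 ≤ g' j := le_trans (le_of_eq h0) (hg'.monotone (Nat.zero_le j))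
  exact hint _ ⟨0, rfl⟩ _ ⟨j, rfl⟩ _ h2 h1

lemma range_eq_aux {g g' : ℕ → S} (hg : StrictMono g) (hg' : StrictMono g')
    (hint : IsIntvl (range g)) (hint' : IsIntvl (range g')) (h0 : g 0 = g' 0) :
    range g = range g' := by
  by_cases hsub : range g ⊆ range g'
  · exact hsub.antisymm (range_sub_aux hg hg' hint h0 hsub)
  · obtain ⟨x, hx, hx'⟩ := not_subset.mp hsub
    have hsub' : range g' ⊆ range g := by
      rintro _ ⟨c, rfl⟩
      rcases le_or_gt (g' c) x with hcx | hxc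
      · exact hint _ ⟨0, rfl⟩ _ hx _ (le_trans (le_of_eq h0) (hg'.monotone (Nat.zero_le c))) hcx
      · obtain ⟨a, rfl⟩ := hx
        exact absurd (hint' _ ⟨0, rfl⟩ _ ⟨c, rfl⟩ _
          (le_trans (le_of_eq h0.symm) (hg.monotone (Nat.zero_le a))) hxc.le) hx'
    exact (range_sub_aux hg' hg hint' h0.symm hsub').antisymm hsub'

lemma range_eq_aux_anti {g g' : ℕ → S} (hg : StrictAnti g) (hg' : StrictAnti g')
    (hint : IsIntvl (range g)) (hint' : IsIntvl (range g')) (h0 : g 0 = g' 0) :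
    range g = range g' := by
  have := range_eq_aux (S := Sᵒᵈ) (g := fun j => OrderDual.toDual (g j))
    (g' := fun j => OrderDual.toDual (g' j))
    (fun a b hab => by exact hg hab) (fun a b hab => by exact hg' hab)
    (fun a ha c hc s h1 h2 => hint c hc a ha s h2 h1)
    (fun a ha c hc s h1 h2 => hint' c hc a ha s h2 h1)
    (by exact h0)
  exact this

def IsFirstEl (b : Bool) (s : S) (T : Set S) : Prop :=
  s ∈ T ∧ ∀ t ∈ T, if b then s ≤ t else t ≤ s

lemma imi_first_eq {v : S → Letter} {idx : ℕ → ℕ} {ℓ : ℕ} {b : Bool} {T : Set S}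
    (h : IsMonoInterval v idx ℓ b T) {s : S} (hs : IsFirstEl b s T) :
    ∃ g : ℕ → S, (if b then StrictMono g else StrictAnti g) ∧ range g = T ∧
      (∀ j, v (g j) = (b, idx (ℓ + j))) ∧ g 0 = s := by
  obtain ⟨hint, g, hg, hrg, hv⟩ := h
  refine ⟨g, hg, hrg, hv, ?_⟩
  obtain ⟨m, hm⟩ : s ∈ range g := hrg ▸ hs.1
  have hfirst := hs.2 (g 0) (hrg ▸ ⟨0, rfl⟩)
  cases b with
  | true =>
    simp only [if_true] at hg hfirst
    exact le_antisymm ((hm ▸ hg.monotone (Nat.zero_le m)) : g 0 ≤ s) hfirst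
  | false =>
    simp only [Bool.false_eq_true, if_false] at hg hfirst
    exact le_antisymm hfirst ((hm ▸ hg.antitone (Nat.zero_le m)) : s ≤ g 0)

lemma imi_unique {v : S → Letter} {idx : ℕ → ℕ} {ℓ : ℕ} {b : Bool} {T T' : Set S}
    (h : IsMonoInterval v idx ℓ b T) (h' : IsMonoInterval v idx ℓ b T') {s : S}
    (hs : IsFirstEl b s T) (hs' : IsFirstEl b s T') : T = T' := by
  obtain ⟨g, hg, hrg, _, h0⟩ := imi_first_eq h hs
  obtain ⟨g', hg', hrg', _, h0'⟩ := imi_first_eq h' hs'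
  have hint : IsIntvl (range g) := hrg ▸ h.1
  have hint' : IsIntvl (range g') := hrg' ▸ h'.1
  rw [← hrg, ← hrg']
  cases b with
  | true =>
    simp only [if_true] at hg hg'
    exact range_eq_aux hg hg' hint hint' (h0.trans h0'.symm)
  | false =>
    simp only [Bool.false_eq_true, if_false] at hg hg'
    exact range_eq_aux_anti hg hg' hint hint' (h0.trans h0'.symm)

lemma imi_isFirst_g0 {b : Bool} {g : ℕ → S}
    (hg : if b then StrictMono g else StrictAnti g) :
    IsFirstEl b (g 0) (range g) := by
  refine ⟨⟨0, rfl⟩, ?_⟩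
  rintro _ ⟨j, rfl⟩
  cases b with
  | true => simpa using (by simpa using hg : StrictMono g).monotone (Nat.zero_le j)
  | false => simpa using (by simpa using hg : StrictAnti g).antitone (Nat.zero_le j)

lemma imi_finite (v : S → Letter) (hfib : ∀ a : Letter, {s | v s = a}.Finite)
    (idx : ℕ → ℕ) (ℓ : ℕ) (b : Bool) :
    {T | IsMonoInterval v idx ℓ b T}.Finite := by
  apply Set.Finite.of_surjOn
    (fun s => {x | ∃ T, IsMonoInterval v idx ℓ b T ∧ IsFirstEl b s T ∧ x ∈ T})
    ?_ (hfib (b, idx ℓ))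
  intro T hT
  obtain ⟨hint, g, hg, hrg, hv⟩ := hT
  have hfirst : IsFirstEl b (g 0) T := hrg ▸ imi_isFirst_g0 hg
  refine ⟨g 0, ?_, ?_⟩
  · show v (g 0) = (b, idx ℓ)
    simpa using hv 0
  · ext x
    constructor
    · rintro ⟨T', hT', hfirst', hx⟩
      rwa [imi_unique hT' ⟨hint, g, hg, hrg, hv⟩ hfirst' hfirst] at hx
    · intro hx
      exact ⟨T, ⟨hint, g, hg, hrg, hv⟩, hfirst, hx⟩

end Statement16Aux

section Transfer
variable {S' S : Type} [LinearOrder S'] [LinearOrder S]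

lemma imi_map {f : S' → S} (hf : ∀ a b, f a ≤ f b ↔ a ≤ b)
    (hconv : ∀ a b x, f a ≤ x → x ≤ f b → x ∈ range f)
    {w' : S' → Letter} {w : S → Letter} (hcomm : ∀ s, w (f s) = w' s)
    (idx : ℕ → ℕ) (ℓ : ℕ) (b : Bool) (T : Set S') :
    IsMonoInterval w' idx ℓ b T ↔ IsMonoInterval w idx ℓ b (f '' T) := by
  have hflt : ∀ a b, f a < f b ↔ a < b := fun a b => by
    rw [lt_iff_le_not_ge, lt_iff_le_not_ge, hf, hf]
  have hfinj : Function.Injective f := fun a b h =>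
    le_antisymm ((hf a b).mp h.le) ((hf b a).mp h.ge)
  constructor
  · rintro ⟨hint, g, hg, hrg, hv⟩
    refine ⟨?_, f ∘ g, ?_, ?_, ?_⟩
    · rintro _ ⟨a', ha', rfl⟩ _ ⟨c', hc', rfl⟩ s h1 h2
      obtain ⟨s', rfl⟩ := hconv a' c' s h1 h2
      exact ⟨s', hint a' ha' c' hc' s' ((hf _ _).mp h1) ((hf _ _).mp h2), rfl⟩
    · cases b with
      | true => simp only [if_true] at hg ⊢; exact fun a b h => (hflt _ _).mpr (hg h)
      | false => simp only [Bool.false_eq_true, if_false] at hg ⊢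
                 exact fun a b h => (hflt _ _).mpr (hg h)
    · rw [range_comp, hrg]
    · intro j; rw [Function.comp_apply, hcomm, hv]
  · rintro ⟨hint, g, hg, hrg, hv⟩
    have hmem : ∀ j, ∃ t, t ∈ T ∧ f t = g j := fun j => by
      have : g j ∈ f '' T := hrg ▸ ⟨j, rfl⟩
      exact this.imp fun t ht => ⟨ht.1, ht.2⟩
    choose g' hg'T hg'f using hmem
    refine ⟨?_, g', ?_, ?_, ?_⟩
    · intro a ha c hc s h1 h2
      have : f s ∈ f '' T := by
        apply hint (f a) ⟨a, ha, rfl⟩ (f c) ⟨c, hc, rfl⟩ (f s) ((hf _ _).mpr h1) ((hf _ _).mpr h2)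
      obtain ⟨t, ht, hts⟩ := this
      exact (hfinj hts) ▸ ht
    · cases b with
      | true =>
        simp only [if_true] at hg ⊢
        intro a b h
        have := hg h
        rw [← hg'f a, ← hg'f b] at this
        exact (hflt _ _).mp this
      | false =>
        simp only [Bool.false_eq_true, if_false] at hg ⊢
        intro a b h
        have := hg h
        rw [← hg'f a, ← hg'f b] at this
        exact (hflt _ _).mp this
    · apply Set.eq_of_subset_of_subset
      · rintro _ ⟨j, rfl⟩; exact hg'T j
      · intro t ht
        have : f t ∈ range g := hrg.symm ▸ ⟨t, ht, rfl⟩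
        obtain ⟨j, hj⟩ := this
        exact ⟨j, hfinj (hg'f j ▸ hj.symm ▸ rfl)⟩
    · intro j; rw [← hcomm, hg'f, hv]
end Transfer

section LexHelpers
variable {S₁ S₂ : Type} [LinearOrder S₁] [LinearOrder S₂]

def eL : S₁ → S₁ ⊕ₗ S₂ := fun s => toLex (Sum.inl s)
def eR : S₂ → S₁ ⊕ₗ S₂ := fun s => toLex (Sum.inr s)

lemma eL_le_iff {a b : S₁} : (eL a : S₁ ⊕ₗ S₂) ≤ eL b ↔ a ≤ b := Sum.Lex.inl_le_inl_iff
lemma eR_le_iff {a b : S₂} : (eR a : S₁ ⊕ₗ S₂) ≤ eR b ↔ a ≤ b := Sum.Lex.inr_le_inr_iff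
lemma eL_lt_eR (a : S₁) (b : S₂) : (eL a : S₁ ⊕ₗ S₂) < eR b := Sum.Lex.inl_lt_inr a b
lemma not_eR_le_eL {a : S₁} {b : S₂} : ¬ (eR b : S₁ ⊕ₗ S₂) ≤ eL a := Sum.Lex.not_inr_le_inl

lemma mem_eL_or_eR (x : S₁ ⊕ₗ S₂) : x ∈ range (eL (S₂ := S₂)) ∨ x ∈ range (eR (S₁ := S₁)) := by
  rcases h : ofLex x with s | s
  · left; exact ⟨s, by rw [eL, ← h]; rfl⟩
  · right; exact ⟨s, by rw [eR, ← h]; rfl⟩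

lemma le_eL_mem {x : S₁ ⊕ₗ S₂} {a : S₁} (h : x ≤ eL a) : x ∈ range (eL (S₂ := S₂)) := by
  rcases mem_eL_or_eR x with hx | ⟨s, rfl⟩
  · exact hx
  · exact absurd h not_eR_le_eL

lemma eR_le_mem {x : S₁ ⊕ₗ S₂} {a : S₂} (h : eR a ≤ x) : x ∈ range (eR (S₁ := S₁)) := by
  rcases mem_eL_or_eR x with ⟨s, rfl⟩ | hx
  · exact absurd h not_eR_le_eL
  · exact hx

lemma eL_conv (a b : S₁) (x : S₁ ⊕ₗ S₂) (h1 : eL a ≤ x) (h2 : x ≤ eL b) :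
    x ∈ range (eL (S₂ := S₂)) := le_eL_mem h2

lemma eR_conv (a b : S₂) (x : S₁ ⊕ₗ S₂) (h1 : eR a ≤ x) (h2 : x ≤ eR b) :
    x ∈ range (eR (S₁ := S₁)) := eR_le_mem h1

lemma eL_ne_eR (a : S₁) (b : S₂) : (eL a : S₁ ⊕ₗ S₂) ≠ eR b := by
  intro h
  exact absurd (le_of_eq h.symm) not_eR_le_eL

end LexHelpers


section Main
variable {S₁ S₂ : Type} [LinearOrder S₁] [LinearOrder S₂]
  {w₁ : S₁ → Letter} {w₂ : S₂ → Letter} {w : S₁ ⊕ₗ S₂ → Letter}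

lemma no_straddle (hwL : ∀ s, w (eL s) = w₁ s) {idx : ℕ → ℕ} {ℓ : ℕ} {b : Bool}
    {T : Set (S₁ ⊕ₗ S₂)} (h : IsMonoInterval w idx ℓ b T)
    (htop : ∀ s₁ : S₁, (∀ t, t ≤ s₁) → ∀ j, ℓ ≤ j → w₁ s₁ ≠ (b, idx j)) :
    T ⊆ range (eL (S₂ := S₂)) ∨ T ⊆ range (eR (S₁ := S₁)) := by
  classical
  obtain ⟨hint, g, hg, hrg, hv⟩ := h
  cases b with
  | true =>
    simp only [if_true] at hg
    by_cases hall : ∀ j, g j ∈ range (eL (S₂ := S₂))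
    · left; rintro t ht; rw [← hrg] at ht; obtain ⟨j, rfl⟩ := ht; exact hall j
    · push_neg at hall
      have hP : ∃ m, g m ∉ range (eL (S₂ := S₂)) := hall
      obtain ⟨s₂, hs₂⟩ := (mem_eL_or_eR (g (Nat.find hP))).resolve_left (Nat.find_spec hP)
      rcases Nat.eq_zero_or_pos (Nat.find hP) with hm | hm
      · right; rintro t ht; rw [← hrg] at ht; obtain ⟨j, rfl⟩ := ht
        refine eR_le_mem (a := s₂) ?_
        rw [hs₂, hm]; exact hg.monotone (Nat.zero_le j)
      · exfalso
        set m := Nat.find hP with hmdef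
        have hsub1 : m - 1 < Nat.find hP := by rw [← hmdef]; exact Nat.sub_lt hm one_pos
        have hgm1 : g (m - 1) ∈ range (eL (S₂ := S₂)) :=
          not_not.mp (Nat.find_min hP hsub1)
        obtain ⟨s₁, hs₁⟩ := hgm1
        have htop1 : ∀ t : S₁, t ≤ s₁ := by
          intro t; by_contra hts; push_neg at hts
          have h1 : g (m - 1) ≤ eL t := by rw [← hs₁]; exact eL_le_iff.mpr hts.le
          have h2 : (eL t : S₁ ⊕ₗ S₂) ≤ g m := by rw [← hs₂]; exact (eL_lt_eR t s₂).le
          have hmem : (eL t : S₁ ⊕ₗ S₂) ∈ T :=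
            hint _ (hrg ▸ ⟨m - 1, rfl⟩) _ (hrg ▸ ⟨m, rfl⟩) _ h1 h2
          rw [← hrg] at hmem; obtain ⟨j, hj⟩ := hmem
          have hjm : m ≤ j := by
            by_contra hjm; push_neg at hjm
            have hle : g j ≤ g (m - 1) := hg.monotone (Nat.le_sub_one_of_lt hjm)
            rw [hj, ← hs₁] at hle
            exact absurd (eL_le_iff.mp hle) (not_le.mpr hts)
          have hle : g m ≤ g j := hg.monotone hjm
          rw [hj, ← hs₂] at hle
          exact not_eR_le_eL hle
        have hlet : w₁ s₁ = (true, idx (ℓ + (m - 1))) := by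
          rw [← hwL s₁, hs₁, hv]
        exact htop s₁ htop1 (ℓ + (m - 1)) (Nat.le_add_right _ _) hlet
  | false =>
    simp only [Bool.false_eq_true, if_false] at hg
    by_cases hall : ∀ j, g j ∈ range (eR (S₁ := S₁))
    · right; rintro t ht; rw [← hrg] at ht; obtain ⟨j, rfl⟩ := ht; exact hall j
    · push_neg at hall
      have hP : ∃ m, g m ∉ range (eR (S₁ := S₁)) := hall
      obtain ⟨s₁, hs₁⟩ := (mem_eL_or_eR (g (Nat.find hP))).resolve_right (Nat.find_spec hP)
      rcases Nat.eq_zero_or_pos (Nat.find hP) with hm | hm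
      · left; rintro t ht; rw [← hrg] at ht; obtain ⟨j, rfl⟩ := ht
        refine le_eL_mem (a := s₁) ?_
        rw [hs₁, hm]; exact hg.antitone (Nat.zero_le j)
      · exfalso
        set m := Nat.find hP with hmdef
        have hsub1 : m - 1 < Nat.find hP := by rw [← hmdef]; exact Nat.sub_lt hm one_pos
        have hgm1 : g (m - 1) ∈ range (eR (S₁ := S₁)) :=
          not_not.mp (Nat.find_min hP hsub1)
        obtain ⟨s₂, hs₂⟩ := hgm1
        have htop1 : ∀ t : S₁, t ≤ s₁ := by
          intro t; by_contra hts; push_neg at hts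
          have h1 : g m ≤ eL t := by rw [← hs₁]; exact eL_le_iff.mpr hts.le
          have h2 : (eL t : S₁ ⊕ₗ S₂) ≤ g (m - 1) := by
            rw [← hs₂]; exact (eL_lt_eR t s₂).le
          have hmem : (eL t : S₁ ⊕ₗ S₂) ∈ T :=
            hint _ (hrg ▸ ⟨m, rfl⟩) _ (hrg ▸ ⟨m - 1, rfl⟩) _ h1 h2
          rw [← hrg] at hmem; obtain ⟨j, hj⟩ := hmem
          rcases le_or_gt m j with hjm | hjm
          · have hle : g j ≤ g m := hg.antitone hjm
            rw [hj, ← hs₁] at hle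
            exact absurd (eL_le_iff.mp hle) (not_le.mpr hts)
          · have hle : g (m - 1) ≤ g j := hg.antitone (Nat.le_sub_one_of_lt hjm)
            rw [hj, ← hs₂] at hle
            exact not_eR_le_eL hle
        have hlet : w₁ s₁ = (false, idx (ℓ + m)) := by
          rw [← hwL s₁, hs₁, hv]
        exact htop s₁ htop1 (ℓ + m) (Nat.le_add_right _ _) hlet

lemma imi_nonempty {S : Type} [LinearOrder S] {v : S → Letter} {idx : ℕ → ℕ} {ℓ : ℕ}
    {b : Bool} {T : Set S} (h : IsMonoInterval v idx ℓ b T) : T.Nonempty := by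
  obtain ⟨-, g, -, hrg, -⟩ := h
  exact ⟨g 0, hrg ▸ ⟨0, rfl⟩⟩

lemma eL_injective : Function.Injective (eL (S₁ := S₁) (S₂ := S₂)) := fun a b h =>
  le_antisymm (eL_le_iff.mp h.le) (eL_le_iff.mp h.ge)

lemma eR_injective : Function.Injective (eR (S₁ := S₁) (S₂ := S₂)) := fun a b h =>
  le_antisymm (eR_le_iff.mp h.le) (eR_le_iff.mp h.ge)

lemma imi_decomp (hwL : ∀ s, w (eL s) = w₁ s) (hwR : ∀ s, w (eR s) = w₂ s)
    (idx : ℕ → ℕ) (ℓ : ℕ) (b : Bool)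
    (htop : ∀ s₁ : S₁, (∀ t, t ≤ s₁) → ∀ j, ℓ ≤ j → w₁ s₁ ≠ (b, idx j)) :
    {T | IsMonoInterval w idx ℓ b T}
      = (Set.image (eL (S₂ := S₂))) '' {T | IsMonoInterval w₁ idx ℓ b T}
        ∪ (Set.image (eR (S₁ := S₁))) '' {T | IsMonoInterval w₂ idx ℓ b T} := by
  ext T
  simp only [mem_setOf_eq, mem_union, mem_image]
  constructor
  · intro hT
    rcases no_straddle hwL hT htop with hsub | hsub
    · left
      have himg : eL '' (eL ⁻¹' T) = T := Set.image_preimage_eq_of_subset hsub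
      exact ⟨eL ⁻¹' T,
        (imi_map (fun a b => eL_le_iff) eL_conv hwL idx ℓ b _).mpr (himg.symm ▸ hT), himg⟩
    · right
      have himg : eR '' (eR ⁻¹' T) = T := Set.image_preimage_eq_of_subset hsub
      exact ⟨eR ⁻¹' T,
        (imi_map (fun a b => eR_le_iff) eR_conv hwR idx ℓ b _).mpr (himg.symm ▸ hT), himg⟩
  · rintro (⟨T₁, hT₁, rfl⟩ | ⟨T₂, hT₂, rfl⟩)
    · exact (imi_map (fun a b => eL_le_iff) eL_conv hwL idx ℓ b T₁).mp hT₁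
    · exact (imi_map (fun a b => eR_le_iff) eR_conv hwR idx ℓ b T₂).mp hT₂

lemma imi_count (hfib₁ : ∀ a : Letter, {s | w₁ s = a}.Finite)
    (hfib₂ : ∀ a : Letter, {s | w₂ s = a}.Finite)
    (hwL : ∀ s, w (eL s) = w₁ s) (hwR : ∀ s, w (eR s) = w₂ s)
    (idx : ℕ → ℕ) (ℓ : ℕ) (b : Bool)
    (htop : ∀ s₁ : S₁, (∀ t, t ≤ s₁) → ∀ j, ℓ ≤ j → w₁ s₁ ≠ (b, idx j)) :
    {T | IsMonoInterval w idx ℓ b T}.ncard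
      = {T | IsMonoInterval w₁ idx ℓ b T}.ncard
        + {T | IsMonoInterval w₂ idx ℓ b T}.ncard := by
  rw [imi_decomp hwL hwR idx ℓ b htop]
  have hdisj : Disjoint ((Set.image (eL (S₂ := S₂))) '' {T | IsMonoInterval w₁ idx ℓ b T})
      ((Set.image (eR (S₁ := S₁))) '' {T | IsMonoInterval w₂ idx ℓ b T}) := by
    rw [Set.disjoint_left]
    rintro A ⟨T₁, hT₁, rfl⟩ ⟨T₂, hT₂, heq⟩
    obtain ⟨t, ht⟩ := imi_nonempty hT₁
    have : (eL t : S₁ ⊕ₗ S₂) ∈ eR '' T₂ := heq ▸ ⟨t, ht, rfl⟩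
    obtain ⟨y, -, hy⟩ := this
    exact eL_ne_eR t y hy.symm
  rw [Set.ncard_union_eq hdisj
      ((imi_finite w₁ hfib₁ idx ℓ b).image _) ((imi_finite w₂ hfib₂ idx ℓ b).image _),
    Set.ncard_image_of_injective _ (Set.image_injective.mpr eL_injective),
    Set.ncard_image_of_injective _ (Set.image_injective.mpr eR_injective)]

end Main


/-- fact `subdivideN`. If `w = w₁w₂` is a reduced word in the
alphabet `{e⃗_{i_j}, e⃖_{i_j} : j ∈ ℕ}` (the chords `e_{i_0}, e_{i_1}, …` being given by
an injective index sequence), then there is a `k ∈ ℕ` such that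
`n(w,ℓ) = n(w₁,ℓ) + n(w₂,ℓ)` for all `ℓ ≥ k`. -/
theorem statement16 {S₁ S₂ : Type} [LinearOrder S₁] [Countable S₁]
    [LinearOrder S₂] [Countable S₂]
    (w₁ : S₁ → Letter) (w₂ : S₂ → Letter)
    (hfib₁ : ∀ a : Letter, {s | w₁ s = a}.Finite)
    (hfib₂ : ∀ a : Letter, {s | w₂ s = a}.Finite)
    (idx : ℕ → ℕ) (hidx : Function.Injective idx)
    (w : (S₁ ⊕ₗ S₂) → Letter) (hw : w = fun s => Sum.elim w₁ w₂ (ofLex s))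
    (hred : Reduced Letter.inv w) :
    ∃ k : ℕ, ∀ ℓ ≥ k, nval w idx ℓ = nval w₁ idx ℓ + nval w₂ idx ℓ := by
  subst hw
  have hwL : ∀ s : S₁, (fun s => Sum.elim w₁ w₂ (ofLex s)) (eL s) = w₁ s := fun s => rfl
  have hwR : ∀ s : S₂, (fun s => Sum.elim w₁ w₂ (ofLex s)) (eR s) = w₂ s := fun s => rfl
  have key : ∀ ℓ : ℕ,
      (∀ s₁ : S₁, (∀ t, t ≤ s₁) → ∀ j, ℓ ≤ j → ∀ b : Bool, w₁ s₁ ≠ (b, idx j)) →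
      nval (fun s => Sum.elim w₁ w₂ (ofLex s)) idx ℓ = nval w₁ idx ℓ + nval w₂ idx ℓ := by
    intro ℓ htop
    unfold nval
    rw [imi_count (w := fun s => Sum.elim w₁ w₂ (ofLex s)) hfib₁ hfib₂ hwL hwR idx ℓ true (fun s h j hj => htop s h j hj true),
      imi_count (w := fun s => Sum.elim w₁ w₂ (ofLex s)) hfib₁ hfib₂ hwL hwR idx ℓ false (fun s h j hj => htop s h j hj false)]
    push_cast
    ring
  by_cases hex : ∃ s₁ : S₁, (∀ t, t ≤ s₁) ∧ ∃ j, (w₁ s₁).2 = idx j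
  · obtain ⟨s₀, hs₀, j₀, hj₀⟩ := hex
    refine ⟨j₀ + 1, fun ℓ hℓ => key ℓ ?_⟩
    intro s₁ h1 j hj b hne
    have hs : s₁ = s₀ := le_antisymm (hs₀ s₁) (h1 s₀)
    have h2 : (w₁ s₀).2 = idx j := by rw [← hs, hne]
    have : j = j₀ := hidx (h2.symm.trans hj₀)
    omega
  · refine ⟨0, fun ℓ _ => key ℓ ?_⟩
    intro s₁ h1 j hj b hne
    exact hex ⟨s₁, h1, j, by rw [hne]⟩
end
end
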